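/- arXiv:2306.04110 — 6 statements merged into one kernel-verified Lean document; each statement's English description precedes it below -/
import Mathlib

section
/- For every integer k ≥ 1, f(P_3^k) = 2, where f(G) = min{Δ(G[S]) : S ⊆ V(G), |S| = α(G)+1}. -/
open Finset

/-- The path graph on vertex set `{1,…,m}`, realized on `Fin m`
(vertex `i : Fin m` stands for label `i+1`); label `i` is adjacent to label `i+1`. -/
def pathGraph' (m : ℕ) : SimpleGraph (Fin m) where
  Adj i j := (i : ℕ) + 1 = (j : ℕ) ∨ (j : ℕ) + 1 = (i : ℕ)
  symm := by constructor; intro i j h; tauto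
  loopless := by constructor; intro i h; omega

/-- The Cartesian (box) product of `k` copies of the path `P_m`:
two vertices are adjacent iff they differ in exactly one coordinate, and
in that coordinate they are adjacent in the path. -/
def boxPower (m k : ℕ) : SimpleGraph (Fin k → Fin m) where
  Adj u v := ∃ i, (pathGraph' m).Adj (u i) (v i) ∧ ∀ j, j ≠ i → u j = v j
  symm := by
    constructor
    rintro u v ⟨i, hadj, h⟩
    exact ⟨i, hadj.symm, fun j hj => (h j hj).symm⟩
  loopless := by
    constructor
    rintro u ⟨i, hadj, -⟩
    exact hadj.ne rfl


/-- A finite set of vertices is independent if its vertices are pairwise nonadjacent. -/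
def IsIndepFinset {V : Type*} (G : SimpleGraph V) (S : Finset V) : Prop :=
  ∀ u ∈ S, ∀ v ∈ S, ¬ G.Adj u v

/-- The independence number `α(G)` of a finite graph. -/
noncomputable def indepNum {V : Type*} [Fintype V] (G : SimpleGraph V) : ℕ :=
  sSup {n | ∃ S : Finset V, IsIndepFinset G S ∧ S.card = n}

open scoped Classical in
/-- The maximum degree `Δ(G[S])` of the subgraph of `G` induced on `S`. -/
noncomputable def maxDegOn {V : Type*} (G : SimpleGraph V) (S : Finset V) : ℕ :=
  S.sup fun v => (S.filter fun u => G.Adj v u).card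

/-- `f(G)`: the minimum, over vertex subsets `S` of size `α(G)+1`, of the maximum
degree of the induced subgraph `G[S]`. -/
noncomputable def minMaxDeg {V : Type*} [Fintype V] (G : SimpleGraph V) : ℕ :=
  sInf {d | ∃ S : Finset V, S.card = indepNum G + 1 ∧ maxDegOn G S = d}


abbrev V3 (k : ℕ) := Fin k → Fin 3

lemma sum_split {M : Type*} [AddCommMonoid M] {k : ℕ} (f : V3 (k+1) → M) :
    ∑ y, f y = ∑ t : Fin 3, ∑ x : V3 k, f (Fin.cons t x) := by
  rw [← (Fintype.sum_equiv (Fin.consEquiv fun _ => Fin 3) (fun p => f (Fin.cons p.1 p.2)) f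
    (fun p => rfl)), Fintype.sum_prod_type]

/-- The signed adjacency operator (Jordan–Wigner signing). -/
def Mop : (k : ℕ) → (V3 k → ℝ) → V3 k → ℝ
  | 0, _, _ => 0
  | k+1, v, y =>
    (if y 0 = 1 then (-1 : ℝ) else 1) * Mop k (fun z => v (Fin.cons (y 0) z)) (Fin.tail y)
    + (if y 0 = 1 then v (Fin.cons 0 (Fin.tail y)) + v (Fin.cons 2 (Fin.tail y))
       else v (Fin.cons 1 (Fin.tail y)))

/-- The kernel vector. -/
def ee : (k : ℕ) → V3 k → ℝ
  | 0, _ => 1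
  | k+1, y => (if y 0 = 0 then 1 else if y 0 = 2 then -1 else 0) * ee k (Fin.tail y)

lemma Mop_cons {k : ℕ} (v : V3 (k+1) → ℝ) (t : Fin 3) (x : V3 k) :
    Mop (k+1) v (Fin.cons t x) =
    (if t = 1 then (-1 : ℝ) else 1) * Mop k (fun z => v (Fin.cons t z)) x
    + (if t = 1 then v (Fin.cons 0 x) + v (Fin.cons 2 x) else v (Fin.cons 1 x)) := by
  simp [Mop, Fin.tail_cons]

lemma ee_cons {k : ℕ} (t : Fin 3) (x : V3 k) :
    ee (k+1) (Fin.cons t x) = (if t = 0 then 1 else if t = 2 then -1 else 0) * ee k x := by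
  simp [ee, Fin.tail_cons]

lemma Mop_add {k : ℕ} (v w : V3 k → ℝ) :
    Mop k (fun x => v x + w x) = fun x => Mop k v x + Mop k w x := by
  induction k with
  | zero => funext x; simp [Mop]
  | succ k ih => funext x; simp only [Mop, ih]; split <;> ring

lemma Mop_smul {k : ℕ} (c : ℝ) (v : V3 k → ℝ) :
    Mop k (fun x => c * v x) = fun x => c * Mop k v x := by
  induction k with
  | zero => funext x; simp [Mop]
  | succ k ih => funext x; simp only [Mop, ih]; split <;> ring

lemma Mop_symm {k : ℕ} (v w : V3 k → ℝ) :
    ∑ y, Mop k v y * w y = ∑ y, v y * Mop k w y := by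
  induction k with
  | zero => simp [Mop]
  | succ k ih =>
    rw [sum_split (f := fun y => Mop (k+1) v y * w y),
        sum_split (f := fun y => v y * Mop (k+1) w y)]
    simp only [Mop_cons, Fin.sum_univ_three]
    simp only [(by decide : ((2:Fin 3) = 1) = False), (by decide : ((0:Fin 3) = 1) = False),
      (by decide : ((1:Fin 3) = 1) = True), if_false, if_true, one_mul, neg_one_mul]
    have h0 := ih (fun z => v (Fin.cons 0 z)) (fun z => w (Fin.cons 0 z))
    have h1 := ih (fun z => v (Fin.cons 1 z)) (fun z => w (Fin.cons 1 z))
    have h2 := ih (fun z => v (Fin.cons 2 z)) (fun z => w (Fin.cons 2 z))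
    simp only [add_mul, mul_add, neg_mul, mul_neg, neg_add, Finset.sum_add_distrib, Finset.sum_neg_distrib]
    linarith

lemma ee_sq (k : ℕ) : ∑ y, (ee k y)^2 = (2:ℝ)^k := by
  induction k with
  | zero => simp [ee]
  | succ k ih =>
    rw [sum_split (f := fun y => (ee (k+1) y)^2)]
    simp only [ee_cons, Fin.sum_univ_three]
    simp only [(by decide : ((2:Fin 3) = 0) = False), (by decide : ((0:Fin 3) = 0) = True),
      (by decide : ((1:Fin 3) = 0) = False), (by decide : ((2:Fin 3) = 2) = True),
      (by decide : ((1:Fin 3) = 2) = False), if_false, if_true, mul_pow, ih]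
    norm_num [ih]
    ring

lemma expand_sq2 {k : ℕ} (f g : V3 k → ℝ) :
    ∑ x, (f x + g x)^2 = ∑ x, (f x)^2 + 2*(∑ x, f x * g x) + ∑ x, (g x)^2 := by
  rw [Finset.mul_sum, ← Finset.sum_add_distrib, ← Finset.sum_add_distrib]
  exact Finset.sum_congr rfl fun x _ => by ring

lemma expand_sq3 {k : ℕ} (f g h : V3 k → ℝ) :
    ∑ x, (-f x + (g x + h x))^2
      = ∑ x, (f x)^2 - 2*(∑ x, f x * g x) - 2*(∑ x, f x * h x)
        + ∑ x, (g x)^2 + 2*(∑ x, g x * h x) + ∑ x, (h x)^2 := by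
  rw [Finset.mul_sum, Finset.mul_sum, Finset.mul_sum]
  rw [← Finset.sum_sub_distrib, ← Finset.sum_sub_distrib, ← Finset.sum_add_distrib,
     ← Finset.sum_add_distrib, ← Finset.sum_add_distrib]
  exact Finset.sum_congr rfl fun x _ => by ring

lemma Pineq (k : ℕ) (v : V3 k → ℝ) :
    (2:ℝ)^k * (2 * ∑ y, (v y)^2) ≤ (2:ℝ)^k * ∑ y, (Mop k v y)^2 + 2 * (∑ y, v y * ee k y)^2 := by
  induction k with
  | zero => simp [Mop, ee]
  | succ k ih =>
    rw [sum_split (f := fun y => (v y)^2), sum_split (f := fun y => (Mop (k+1) v y)^2),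
        sum_split (f := fun y => v y * ee (k+1) y)]
    simp only [Mop_cons, ee_cons, Fin.sum_univ_three,
      (by decide : ((2:Fin 3) = 1) = False), (by decide : ((0:Fin 3) = 1) = False),
      (by decide : ((1:Fin 3) = 1) = True), (by decide : ((2:Fin 3) = 0) = False),
      (by decide : ((0:Fin 3) = 0) = True), (by decide : ((1:Fin 3) = 0) = False),
      (by decide : ((2:Fin 3) = 2) = True), (by decide : ((1:Fin 3) = 2) = False),
      if_false, if_true, one_mul, neg_one_mul, mul_one, mul_zero, zero_mul, mul_neg,
      Finset.sum_const_zero, Finset.sum_neg_distrib]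
    rw [pow_succ]
    have hp : (0:ℝ) < 2^k := by positivity
    have E0 : ∑ x : V3 k, (Mop k (fun z => v (Fin.cons 0 z)) x + v (Fin.cons 1 x))^2
        = ∑ x : V3 k, (Mop k (fun z => v (Fin.cons 0 z)) x)^2
          + 2*(∑ x : V3 k, Mop k (fun z => v (Fin.cons 0 z)) x * v (Fin.cons 1 x))
          + ∑ x : V3 k, (v (Fin.cons 1 x))^2 := expand_sq2 _ _
    have E2 : ∑ x : V3 k, (Mop k (fun z => v (Fin.cons 2 z)) x + v (Fin.cons 1 x))^2
        = ∑ x : V3 k, (Mop k (fun z => v (Fin.cons 2 z)) x)^2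
          + 2*(∑ x : V3 k, Mop k (fun z => v (Fin.cons 2 z)) x * v (Fin.cons 1 x))
          + ∑ x : V3 k, (v (Fin.cons 1 x))^2 := expand_sq2 _ _
    have E1 : ∑ x : V3 k, (-Mop k (fun z => v (Fin.cons 1 z)) x + (v (Fin.cons 0 x) + v (Fin.cons 2 x)))^2
        = ∑ x : V3 k, (Mop k (fun z => v (Fin.cons 1 z)) x)^2
          - 2*(∑ x : V3 k, Mop k (fun z => v (Fin.cons 1 z)) x * v (Fin.cons 0 x))
          - 2*(∑ x : V3 k, Mop k (fun z => v (Fin.cons 1 z)) x * v (Fin.cons 2 x))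
          + ∑ x : V3 k, (v (Fin.cons 0 x))^2
          + 2*(∑ x : V3 k, v (Fin.cons 0 x) * v (Fin.cons 2 x))
          + ∑ x : V3 k, (v (Fin.cons 2 x))^2 := expand_sq3 _ _ _
    have hA : ∑ x : V3 k, Mop k (fun z => v (Fin.cons 0 z)) x * v (Fin.cons 1 x)
        = ∑ x : V3 k, Mop k (fun z => v (Fin.cons 1 z)) x * v (Fin.cons 0 x) := by
      rw [Mop_symm]; exact Finset.sum_congr rfl fun x _ => mul_comm _ _
    have hB : ∑ x : V3 k, Mop k (fun z => v (Fin.cons 2 z)) x * v (Fin.cons 1 x)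
        = ∑ x : V3 k, Mop k (fun z => v (Fin.cons 1 z)) x * v (Fin.cons 2 x) := by
      rw [Mop_symm]; exact Finset.sum_congr rfl fun x _ => mul_comm _ _
    have ih0 := ih (fun z => v (Fin.cons 0 z))
    have ih1 := ih (fun z => v (Fin.cons 1 z))
    have ih2 := ih (fun z => v (Fin.cons 2 z))
    have cs1 : (∑ x : V3 k, v (Fin.cons 1 x) * ee k x)^2
        ≤ (∑ x : V3 k, (v (Fin.cons 1 x))^2) * 2^k := by
      have h := Finset.sum_mul_sq_le_sq_mul_sq Finset.univ (fun x => v (Fin.cons 1 x)) (ee k)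
      rwa [ee_sq] at h
    have cs02 : (∑ x : V3 k, v (Fin.cons 0 x) * ee k x + ∑ x : V3 k, v (Fin.cons 2 x) * ee k x)^2
        ≤ (∑ x : V3 k, (v (Fin.cons 0 x))^2 + 2*(∑ x : V3 k, v (Fin.cons 0 x) * v (Fin.cons 2 x))
            + ∑ x : V3 k, (v (Fin.cons 2 x))^2) * 2^k := by
      have h := Finset.sum_mul_sq_le_sq_mul_sq Finset.univ
        (fun x => v (Fin.cons 0 x) + v (Fin.cons 2 x)) (ee k)
      rw [ee_sq] at h
      have h1 : ∑ x : V3 k, (v (Fin.cons 0 x) + v (Fin.cons 2 x)) * ee k x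
          = ∑ x : V3 k, v (Fin.cons 0 x) * ee k x + ∑ x : V3 k, v (Fin.cons 2 x) * ee k x := by
        rw [← Finset.sum_add_distrib]; exact Finset.sum_congr rfl fun x _ => by ring
      have h2 : ∑ x : V3 k, (v (Fin.cons 0 x) + v (Fin.cons 2 x))^2
          = ∑ x : V3 k, (v (Fin.cons 0 x))^2 + 2*(∑ x : V3 k, v (Fin.cons 0 x) * v (Fin.cons 2 x))
            + ∑ x : V3 k, (v (Fin.cons 2 x))^2 := expand_sq2 _ _
      rw [h1, h2] at h
      exact h
    rw [E0, E1, E2, hA, hB]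
    nlinarith [ih0, ih1, ih2, cs1, cs02, hp, sq_nonneg (∑ x : V3 k, v (Fin.cons 0 x) * ee k x + ∑ x : V3 k, v (Fin.cons 2 x) * ee k x), sq_nonneg (∑ x : V3 k, v (Fin.cons 0 x) * ee k x - ∑ x : V3 k, v (Fin.cons 2 x) * ee k x)]

lemma adj_cons_iff {k : ℕ} (t s : Fin 3) (x y : V3 k) :
    (boxPower 3 (k+1)).Adj (Fin.cons t x) (Fin.cons s y) ↔
      (t = s ∧ (boxPower 3 k).Adj x y) ∨ (x = y ∧ (pathGraph' 3).Adj t s) := by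
  constructor
  · rintro ⟨i, hadj, hrest⟩
    rcases Fin.eq_zero_or_eq_succ i with rfl | ⟨j, rfl⟩
    · refine Or.inr ⟨funext fun j => ?_, by simpa using hadj⟩
      have := hrest j.succ (Fin.succ_ne_zero j)
      simpa using this
    · refine Or.inl ⟨by simpa using hrest 0 (Fin.succ_ne_zero j).symm, j, by simpa using hadj, ?_⟩
      intro l hl
      have := hrest l.succ (by simpa [Fin.succ_inj] using hl)
      simpa using this
  · rintro (⟨rfl, j, hadj, hrest⟩ | ⟨rfl, hadj⟩)
    · refine ⟨j.succ, by simpa using hadj, fun l hl => ?_⟩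
      rcases Fin.eq_zero_or_eq_succ l with rfl | ⟨m, rfl⟩
      · simp
      · simp only [Fin.cons_succ]
        exact hrest m (by simpa [Fin.succ_inj] using hl)
    · exact ⟨0, by simpa using hadj, fun l hl => by
        rcases Fin.eq_zero_or_eq_succ l with rfl | ⟨m, rfl⟩
        · exact absurd rfl hl
        · simp⟩

/-- coefficients of `Mop` -/
def cc : (k : ℕ) → V3 k → V3 k → ℝ
  | 0, _, _ => 0
  | k+1, x, y =>
    if x 0 = y 0 then
      (if x 0 = 1 then -1 else 1) * cc k (Fin.tail x) (Fin.tail y)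
    else if Fin.tail x = Fin.tail y ∧ (((x 0 : ℕ)) + 1 = (y 0 : ℕ) ∨ ((y 0 : ℕ)) + 1 = (x 0 : ℕ))
      then 1 else 0

lemma cc_cons {k : ℕ} (t s : Fin 3) (x y : V3 k) :
    cc (k+1) (Fin.cons t x) (Fin.cons s y) =
    if t = s then (if t = 1 then -1 else 1) * cc k x y
    else if x = y ∧ (((t : ℕ)) + 1 = (s : ℕ) ∨ ((s : ℕ)) + 1 = (t : ℕ)) then 1 else 0 := by
  simp [cc, Fin.tail_cons]

lemma cc_abs {k : ℕ} (x y : V3 k) : |cc k x y| ≤ 1 := by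
  induction k with
  | zero => simp [cc]
  | succ k ih =>
    rw [← Fin.cons_self_tail x, ← Fin.cons_self_tail y, cc_cons]
    split
    · rw [abs_mul]
      rcases le_or_gt (abs (if x 0 = 1 then (-1:ℝ) else 1)) 1 with h | h
      · exact mul_le_one₀ h (abs_nonneg _) (ih _ _)
      · exfalso; revert h; split <;> simp
    · split <;> simp

lemma cc_not_adj {k : ℕ} (x y : V3 k) (h : ¬ (boxPower 3 k).Adj x y) : cc k x y = 0 := by
  induction k with
  | zero => simp [cc]
  | succ k ih =>
    rw [← Fin.cons_self_tail x, ← Fin.cons_self_tail y] at h ⊢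
    rw [cc_cons]
    rw [adj_cons_iff] at h
    push_neg at h
    split
    · rename_i hts
      rw [ih _ _ (h.1 hts), mul_zero]
    · split
      · rename_i hc
        exact absurd hc.2 (by simpa [pathGraph', hc.1] using h.2 hc.1)
      · rfl

lemma Mop_eq_sum_cc (k : ℕ) (v : V3 k → ℝ) (x : V3 k) :
    Mop k v x = ∑ y, cc k x y * v y := by
  induction k with
  | zero => simp [Mop, cc]
  | succ k ih =>
    rw [← Fin.cons_self_tail x, sum_split (f := fun y => cc (k+1) (Fin.cons (x 0) (Fin.tail x)) y * v y)]
    simp only [cc_cons, Mop_cons, Fin.sum_univ_three]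
    have hval : x 0 = 0 ∨ x 0 = 1 ∨ x 0 = 2 := by omega
    rcases hval with h0 | h0 | h0 <;> rw [h0] <;>
      simp [ih, Finset.sum_ite_eq, ite_and, mul_comm] <;> ring

def extz {k : ℕ} (S : Finset (V3 k)) (f : {x // x ∈ S} → ℝ) : V3 k → ℝ :=
  fun x => if h : x ∈ S then f ⟨x, h⟩ else 0

lemma extz_add {k : ℕ} (S : Finset (V3 k)) (f g : {x // x ∈ S} → ℝ) :
    extz S (f + g) = fun x => extz S f x + extz S g x := by
  funext x; simp only [extz]; split <;> simp

lemma extz_smul {k : ℕ} (S : Finset (V3 k)) (c : ℝ) (f : {x // x ∈ S} → ℝ) :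
    extz S (c • f) = fun x => c * extz S f x := by
  funext x; simp only [extz]; split <;> simp

lemma key (k : ℕ) (S : Finset (V3 k))
    (h1 : ∀ x ∈ S, ∀ y ∈ S, ∀ z ∈ S,
      (boxPower 3 k).Adj x y → (boxPower 3 k).Adj x z → y = z) :
    2 * S.card ≤ 3^k + 1 := by
  classical
  set T : ({x // x ∈ S} → ℝ) →ₗ[ℝ] ℝ × ({x // x ∈ Sᶜ} → ℝ) :=
    { toFun := fun f => (∑ x, extz S f x * ee k x, fun y => Mop k (extz S f) (y : V3 k)),
      map_add' := by
        intro f g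
        have h2 : Mop k (extz S (f + g)) = fun x => Mop k (extz S f) x + Mop k (extz S g) x := by
          rw [extz_add]; exact Mop_add _ _
        refine Prod.ext ?_ ?_
        · simp only [extz_add, Prod.fst_add, add_mul, Finset.sum_add_distrib]
        · funext y
          simp only [Prod.snd_add, h2, Pi.add_apply]
      map_smul' := by
        intro c f
        have h2 : Mop k (extz S (c • f)) = fun x => c * Mop k (extz S f) x := by
          rw [extz_smul]; exact Mop_smul _ _
        refine Prod.ext ?_ ?_
        · simp only [extz_smul, RingHom.id_apply, Prod.smul_fst, smul_eq_mul, Finset.mul_sum]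
          exact Finset.sum_congr rfl fun x _ => by ring
        · funext y
          simp only [h2, RingHom.id_apply, Prod.smul_snd, Pi.smul_apply, smul_eq_mul] } with hT
  have hinj : Function.Injective T := by
    rw [injective_iff_map_eq_zero]
    intro f hf
    set vv : V3 k → ℝ := extz S f with hvv
    have supp : ∀ x, x ∉ S → vv x = 0 := by intro x hx; simp [hvv, extz, hx]
    have h_e : ∑ x, vv x * ee k x = 0 := congrArg Prod.fst hf
    have h_c : ∀ y, y ∉ S → Mop k vv y = 0 := by
      intro y hy
      have := congrFun (congrArg Prod.snd hf) ⟨y, Finset.mem_compl.2 hy⟩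
      exact this
    -- each vertex of S has at most one S-neighbor
    have hN : ∀ x ∈ S, (S.filter (fun y => (boxPower 3 k).Adj x y)).card ≤ 1 := by
      intro x hx
      refine Finset.card_le_one.2 fun y hy z hz => ?_
      simp only [Finset.mem_filter] at hy hz
      exact h1 x hx y hy.1 z hz.1 hy.2 hz.2
    have hMv : ∀ x ∈ S, Mop k vv x =
        ∑ y ∈ S.filter (fun y => (boxPower 3 k).Adj x y), cc k x y * vv y := by
      intro x hx
      rw [Mop_eq_sum_cc]
      refine (Finset.sum_subset (Finset.subset_univ _) fun y _ hy => ?_).symm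
      by_cases hyS : y ∈ S
      · have hna : ¬ (boxPower 3 k).Adj x y := fun had => hy (Finset.mem_filter.2 ⟨hyS, had⟩)
        rw [cc_not_adj _ _ hna, zero_mul]
      · rw [supp y hyS, mul_zero]
    -- bound each term
    have hbd : ∀ x ∈ S, (Mop k vv x)^2 ≤
        ∑ y ∈ S.filter (fun y => (boxPower 3 k).Adj x y), (vv y)^2 := by
      intro x hx
      rw [hMv x hx]
      rcases Finset.card_le_one_iff_subset_singleton.1 (hN x hx) with ⟨y0, hy0⟩
      rcases Finset.subset_singleton_iff.1 hy0 with he | he <;> rw [he]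
      · simp
      · simp only [Finset.sum_singleton]
        have hc2 : cc k x y0 ^ 2 ≤ 1 := (sq_le_one_iff_abs_le_one _).2 (cc_abs x y0)
        nlinarith [mul_nonneg (sub_nonneg.2 hc2) (sq_nonneg (vv y0))]
    -- disjointness of neighborhoods and summation
    have hsum2 : ∑ x ∈ S, (Mop k vv x)^2 ≤ ∑ y ∈ S, (vv y)^2 := by
      calc ∑ x ∈ S, (Mop k vv x)^2
          ≤ ∑ x ∈ S, ∑ y ∈ S.filter (fun y => (boxPower 3 k).Adj x y), (vv y)^2 :=
            Finset.sum_le_sum hbd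
        _ = ∑ y ∈ S.biUnion (fun x => S.filter (fun y => (boxPower 3 k).Adj x y)), (vv y)^2 := by
            refine (Finset.sum_biUnion ?_).symm
            intro a ha b hb hab
            simp only [Finset.disjoint_left]
            intro y hya hyb
            simp only [Finset.mem_filter] at hya hyb
            exact hab (h1 y hya.1 a ha b hb ((boxPower 3 k).adj_symm hya.2) ((boxPower 3 k).adj_symm hyb.2))
        _ ≤ ∑ y ∈ S, (vv y)^2 := by
            refine Finset.sum_le_sum_of_subset_of_nonneg ?_ (fun y _ _ => sq_nonneg _)
            intro y hy
            rcases Finset.mem_biUnion.1 hy with ⟨x, _, hyx⟩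
            exact (Finset.mem_filter.1 hyx).1
    have hall : ∑ y, (Mop k vv y)^2 = ∑ y ∈ S, (Mop k vv y)^2 := by
      refine (Finset.sum_subset (Finset.subset_univ _) fun y _ hy => ?_).symm
      rw [h_c y hy]; ring
    have hSle : ∑ y ∈ S, (vv y)^2 ≤ ∑ y, (vv y)^2 :=
      Finset.sum_le_sum_of_subset_of_nonneg (Finset.subset_univ _) (fun y _ _ => sq_nonneg _)
    have hP := Pineq k vv
    rw [h_e] at hP
    have hzero : ∑ y, (vv y)^2 = 0 := by
      have hp : (0:ℝ) < 2^k := by positivity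
      have hc1 : ∑ y, (Mop k vv y)^2 ≤ ∑ y, (vv y)^2 := by rw [hall]; exact hsum2.trans hSle
      have hmul := mul_le_mul_of_nonneg_left hc1 (le_of_lt hp)
      have hnn : (0:ℝ) ≤ ∑ y, (vv y)^2 := Finset.sum_nonneg fun _ _ => sq_nonneg _
      refine le_antisymm ?_ hnn
      by_contra hpos
      push_neg at hpos
      nlinarith [mul_pos hp hpos]
    have hv0 : ∀ y, vv y = 0 := by
      intro y
      have := (Finset.sum_eq_zero_iff_of_nonneg (fun y _ => sq_nonneg (vv y))).1 hzero y
        (Finset.mem_univ y)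
      exact pow_eq_zero_iff (by norm_num) |>.1 this
    funext s
    have := hv0 (s : V3 k)
    simpa [hvv, extz, s.2] using this
  -- dimension count
  have hle := LinearMap.finrank_le_finrank_of_injective hinj
  rw [Module.finrank_pi, Module.finrank_prod, Module.finrank_pi, Module.finrank_self,
    Fintype.card_coe, Fintype.card_coe, Finset.card_compl] at hle
  have hcard : Fintype.card (V3 k) = 3^k := by
    rw [Fintype.card_fun]; simp
  have hSle2 : S.card ≤ Fintype.card (V3 k) := Finset.card_le_univ S
  omega

def evens (k : ℕ) : Finset (V3 k) := Finset.univ.filter (fun x => (∑ i, (x i : ℕ)) % 2 = 0)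

lemma card_V3 (k : ℕ) : Fintype.card (V3 k) = 3^k := by
  rw [Fintype.card_fun]; simp

lemma evens_card (k : ℕ) : 2 * (evens k).card = 3^k + 1 := by
  induction k with
  | zero =>
    have : (evens 0).card = 1 := by
      rw [evens]
      rw [Finset.filter_true_of_mem (fun x _ => by simp)]
      simp [Finset.card_univ, card_V3]
    omega
  | succ k ih =>
    have hO : (evens k).card + (∑ x : V3 k, if ((1:ℕ) + ∑ i, ((x i:ℕ))) % 2 = 0 then 1 else 0)
        = 3^k := by
      rw [evens, Finset.card_filter, ← Finset.sum_add_distrib]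
      rw [Finset.sum_congr rfl (fun (x : V3 k) _ => (by split_ifs <;> omega :
        ((if (∑ i, ((x i:ℕ))) % 2 = 0 then (1:ℕ) else 0) +
          (if ((1:ℕ) + ∑ i, ((x i:ℕ))) % 2 = 0 then 1 else 0)) = 1))]
      rw [Finset.sum_const, smul_eq_mul, mul_one, Finset.card_univ, card_V3]
    have h0 : ∀ x : V3 k,
        (∑ i, ((Fin.cons (0:Fin 3) x : V3 (k+1)) i : ℕ)) = ∑ i, (x i : ℕ) := by
      intro x; rw [Fin.sum_univ_succ]; simp
    have h1 : ∀ x : V3 k,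
        (∑ i, ((Fin.cons (1:Fin 3) x : V3 (k+1)) i : ℕ)) = 1 + ∑ i, (x i : ℕ) := by
      intro x; rw [Fin.sum_univ_succ]; simp
    have h2 : ∀ x : V3 k,
        (∑ i, ((Fin.cons (2:Fin 3) x : V3 (k+1)) i : ℕ)) = 2 + ∑ i, (x i : ℕ) := by
      intro x; rw [Fin.sum_univ_succ]; simp
    have hc : (evens (k+1)).card
        = ((evens k).card + (∑ x : V3 k, if ((1:ℕ) + ∑ i, ((x i:ℕ))) % 2 = 0 then 1 else 0))
          + (evens k).card := by
      rw [evens, Finset.card_filter, sum_split, Fin.sum_univ_three]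
      congr 1
      · congr 1
        · rw [evens, Finset.card_filter]
          refine Finset.sum_congr rfl fun x _ => ?_
          simp only [h0 x]
        · refine Finset.sum_congr rfl fun x _ => ?_
          simp only [h1 x]
      · rw [evens, Finset.card_filter]
        refine Finset.sum_congr rfl fun x _ => ?_
        simp only [h2 x, Nat.add_mod_left]
    rw [pow_succ]
    generalize hs : (∑ x : V3 k, if ((1:ℕ) + ∑ i, ((x i:ℕ))) % 2 = 0 then 1 else 0) = O at hO hc
    generalize he2 : (evens k).card = E at ih hO hc
    generalize he3 : (evens (k+1)).card = E2 at hc ⊢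
    generalize hn : (3:ℕ)^k = N at ih hO ⊢
    linarith

lemma adj_sum {k : ℕ} {x y : V3 k} (h : (boxPower 3 k).Adj x y) :
    (∑ i, (x i:ℕ)) + 1 = ∑ i, (y i:ℕ) ∨ (∑ i, (y i:ℕ)) + 1 = ∑ i, (x i:ℕ) := by
  obtain ⟨i0, hadj, hrest⟩ := h
  have hx := (Finset.add_sum_erase Finset.univ (fun i => (x i : ℕ)) (Finset.mem_univ i0)).symm
  have hy := (Finset.add_sum_erase Finset.univ (fun i => (y i : ℕ)) (Finset.mem_univ i0)).symm
  have herase : ∑ i ∈ Finset.univ.erase i0, (x i:ℕ) = ∑ i ∈ Finset.univ.erase i0, (y i:ℕ) :=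
    Finset.sum_congr rfl fun j hj => by rw [hrest j (Finset.ne_of_mem_erase hj)]
  rcases hadj with h' | h'
  · left; omega
  · right; omega

lemma indep_evens (k : ℕ) : IsIndepFinset (boxPower 3 k) (evens k) := by
  intro u hu v hv hadj
  simp only [evens, Finset.mem_filter] at hu hv
  rcases adj_sum hadj with h | h <;> omega

lemma indepNum_eq (k : ℕ) : indepNum (boxPower 3 k) = (evens k).card := by
  apply IsGreatest.csSup_eq
  constructor
  · exact ⟨evens k, indep_evens k, rfl⟩
  · rintro n ⟨S, hS, rfl⟩
    have hk := key k S (fun x hx y hy z hz hxy _ => absurd hxy (hS x hx y hy))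
    have h2 := evens_card k
    omega

def S0 (m : ℕ) : Finset (V3 (m+1)) :=
  Finset.univ.filter (fun y => (∑ i : Fin m, ((y i.succ : ℕ))) % 2 = 0)

lemma S0_card (m : ℕ) : (S0 m).card = 3 * (evens m).card := by
  rw [S0, Finset.card_filter, sum_split, Fin.sum_univ_three]
  have h : ∀ (t : Fin 3) (x : V3 m),
      (∑ i : Fin m, ((Fin.cons t x : V3 (m+1)) i.succ : ℕ)) = ∑ i, (x i : ℕ) := by
    intro t x; exact Finset.sum_congr rfl fun i _ => by simp
  have he : ∀ t : Fin 3, (∑ x : V3 m, if (∑ i : Fin m, ((Fin.cons t x : V3 (m+1)) i.succ : ℕ)) % 2 = 0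
      then 1 else 0) = (evens m).card := by
    intro t
    rw [evens, Finset.card_filter]
    exact Finset.sum_congr rfl fun x _ => by rw [h t x]
  rw [he 0, he 1, he 2]
  ring

lemma mem_S0_adj {m : ℕ} {x y : V3 (m+1)} (hx : x ∈ S0 m) (hy : y ∈ S0 m)
    (hadj : (boxPower 3 (m+1)).Adj x y) : ∀ j : Fin m, y j.succ = x j.succ := by
  obtain ⟨i0, hpath, hrest⟩ := hadj
  rcases Fin.eq_zero_or_eq_succ i0 with rfl | ⟨j0, rfl⟩
  · intro j; exact (hrest j.succ (Fin.succ_ne_zero j)).symm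
  · exfalso
    simp only [S0, Finset.mem_filter] at hx hy
    have hxs := (Finset.add_sum_erase Finset.univ (fun i : Fin m => (x i.succ : ℕ))
      (Finset.mem_univ j0)).symm
    have hys := (Finset.add_sum_erase Finset.univ (fun i : Fin m => (y i.succ : ℕ))
      (Finset.mem_univ j0)).symm
    have herase : ∑ i ∈ Finset.univ.erase j0, (x i.succ:ℕ)
        = ∑ i ∈ Finset.univ.erase j0, (y i.succ:ℕ) :=
      Finset.sum_congr rfl fun j hj => by
        rw [hrest j.succ (by simpa [Fin.succ_inj] using Finset.ne_of_mem_erase hj)]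
    rcases hpath with h' | h' <;> omega

lemma S0_deg_le {m : ℕ} (x : V3 (m+1)) (hx : x ∈ S0 m) (inst : DecidablePred (fun u => (boxPower 3 (m+1)).Adj x u)) :
    ((S0 m).filter (fun u => (boxPower 3 (m+1)).Adj x u)).card ≤ 2 := by
  have hsub : (S0 m).filter (fun u => (boxPower 3 (m+1)).Adj x u) ⊆
      (Finset.univ.erase (x 0)).image (fun t => Function.update x 0 t) := by
    intro y hy
    rw [Finset.mem_filter] at hy
    obtain ⟨hyS, hadj⟩ := hy
    have htail := mem_S0_adj hx hyS hadj
    have hyx : y = Function.update x 0 (y 0) := by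
      funext j
      rcases Fin.eq_zero_or_eq_succ j with rfl | ⟨l, rfl⟩
      · simp
      · rw [htail l, Function.update_of_ne (Fin.succ_ne_zero l)]
    have hne : y 0 ≠ x 0 := by
      obtain ⟨i0, hpath, hrest⟩ := hadj
      by_cases h0 : i0 = 0
      · subst h0
        rcases hpath with h' | h' <;> (intro hcontra; rw [hcontra] at h'; omega)
      · intro hcontra
        rcases Fin.eq_zero_or_eq_succ i0 with rfl | ⟨j0, rfl⟩
        · exact h0 rfl
        · have := htail j0
          rcases hpath with h' | h' <;> (rw [this] at h'; omega)
    exact Finset.mem_image.2 ⟨y 0, Finset.mem_erase.2 ⟨hne, Finset.mem_univ _⟩, hyx.symm⟩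
  calc ((S0 m).filter _).card ≤ _ := Finset.card_le_card hsub
    _ ≤ (Finset.univ.erase (x 0)).card := Finset.card_image_le
    _ = 2 := by rw [Finset.card_erase_of_mem (Finset.mem_univ _)]; simp

lemma xhat_mem (m : ℕ) : (Fin.cons 1 (fun _ => 2) : V3 (m+1)) ∈ S0 m := by
  simp only [S0, Finset.mem_filter, Finset.mem_univ, true_and]
  have : ∀ i : Fin m, ((Fin.cons (1:Fin 3) (fun _ => (2:Fin 3)) : V3 (m+1)) i.succ : ℕ) = 2 := by
    intro i; simp
  rw [Finset.sum_congr rfl fun i _ => this i, Finset.sum_const, smul_eq_mul]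
  omega

lemma cons_mem_S0 (m : ℕ) (t : Fin 3) : (Fin.cons t (fun _ => 2) : V3 (m+1)) ∈ S0 m := by
  simp only [S0, Finset.mem_filter, Finset.mem_univ, true_and]
  have : ∀ i : Fin m, ((Fin.cons t (fun _ => (2:Fin 3)) : V3 (m+1)) i.succ : ℕ) = 2 := by
    intro i; simp
  rw [Finset.sum_congr rfl fun i _ => this i, Finset.sum_const, smul_eq_mul]
  omega

lemma adj_xhat (m : ℕ) (t : Fin 3) (ht : t ≠ 1) :
    (boxPower 3 (m+1)).Adj (Fin.cons 1 (fun _ => 2)) (Fin.cons t (fun _ => 2)) := by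
  refine ⟨0, ?_, fun j hj => ?_⟩
  · simp only [Fin.cons_zero]
    show ((1:Fin 3):ℕ) + 1 = (t:ℕ) ∨ (t:ℕ) + 1 = ((1:Fin 3):ℕ)
    have h3 : (t:ℕ) < 3 := t.isLt
    have h1 : (t:ℕ) ≠ 1 := fun hc => ht (Fin.ext (by simpa using hc))
    have h2 : ((1:Fin 3):ℕ) = 1 := rfl
    omega
  · rcases Fin.eq_zero_or_eq_succ j with rfl | ⟨l, rfl⟩
    · exact absurd rfl hj
    · simp

lemma maxDegOn_S0 (m : ℕ) : maxDegOn (boxPower 3 (m+1)) (S0 m) = 2 := by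
  classical
  unfold maxDegOn
  apply le_antisymm
  · exact Finset.sup_le fun x hx => S0_deg_le x hx _
  · refine le_trans ?_ (Finset.le_sup (xhat_mem m))
    have hsub : ({Fin.cons 0 (fun _ => 2), Fin.cons 2 (fun _ => 2)} : Finset (V3 (m+1))) ⊆
        (S0 m).filter (fun u => (boxPower 3 (m+1)).Adj (Fin.cons 1 (fun _ => 2)) u) := by
      intro y hy
      rw [Finset.mem_insert, Finset.mem_singleton] at hy
      rcases hy with rfl | rfl
      · exact Finset.mem_filter.2 ⟨cons_mem_S0 m 0, adj_xhat m 0 (by decide)⟩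
      · exact Finset.mem_filter.2 ⟨cons_mem_S0 m 2, adj_xhat m 2 (by decide)⟩
    have hcard : ({Fin.cons 0 (fun _ => 2), Fin.cons 2 (fun _ => 2)} : Finset (V3 (m+1))).card = 2 := by
      rw [Finset.card_insert_of_notMem, Finset.card_singleton]
      rw [Finset.mem_singleton]
      intro hc
      have := congrFun hc 0
      simp at this
    calc (2:ℕ) = _ := hcard.symm
      _ ≤ _ := Finset.card_le_card hsub

theorem minMaxDeg_boxPower_three' (k : ℕ) (hk : 1 ≤ k) :
    minMaxDeg (boxPower 3 k) = 2 := by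
  obtain ⟨m, rfl⟩ : ∃ m, k = m + 1 := ⟨k - 1, by omega⟩
  classical
  have hcard : (S0 m).card = indepNum (boxPower 3 (m+1)) + 1 := by
    have h1 := S0_card m
    have h2 := evens_card m
    have h3 := evens_card (m+1)
    have h4 := indepNum_eq (m+1)
    have hp : (3:ℕ)^(m+1) = 3^m * 3 := pow_succ 3 m
    omega
  have hmem : 2 ∈ {d | ∃ S : Finset (V3 (m+1)),
      S.card = indepNum (boxPower 3 (m+1)) + 1 ∧ maxDegOn (boxPower 3 (m+1)) S = d} :=
    ⟨S0 m, hcard, maxDegOn_S0 m⟩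
  rw [minMaxDeg]
  apply le_antisymm
  · exact csInf_le (OrderBot.bddBelow _) hmem
  · apply le_csInf ⟨2, hmem⟩
    rintro d ⟨S, hScard, rfl⟩
    by_contra hlt
    push_neg at hlt
    have hle1 : maxDegOn (boxPower 3 (m+1)) S ≤ 1 := by omega
    unfold maxDegOn at hle1
    have h1 : ∀ x ∈ S, ∀ y ∈ S, ∀ z ∈ S,
        (boxPower 3 (m+1)).Adj x y → (boxPower 3 (m+1)).Adj x z → y = z := by
      intro x hx y hy z hz hxy hxz
      by_contra hne
      have hsub : ({y, z} : Finset (V3 (m+1))) ⊆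
          S.filter (fun u => (boxPower 3 (m+1)).Adj x u) := by
        intro w hw
        rw [Finset.mem_insert, Finset.mem_singleton] at hw
        rcases hw with rfl | rfl
        · exact Finset.mem_filter.2 ⟨hy, hxy⟩
        · exact Finset.mem_filter.2 ⟨hz, hxz⟩
      have h2le : 2 ≤ (S.filter (fun u => (boxPower 3 (m+1)).Adj x u)).card := by
        rw [← Finset.card_pair hne]
        exact Finset.card_le_card hsub
      have hle : (S.filter (fun u => (boxPower 3 (m+1)).Adj x u)).card ≤ 1 :=
        le_trans (Finset.le_sup
          (f := fun v => (S.filter (fun u => (boxPower 3 (m+1)).Adj v u)).card) hx) hle1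
      omega
    have hkey := key (m+1) S h1
    have h4 := indepNum_eq (m+1)
    have h3 := evens_card (m+1)
    omega

/-- For every integer `k ≥ 1`, `f(P_3^k) = 2`. -/
theorem minMaxDeg_boxPower_three (k : ℕ) (hk : 1 ≤ k) :
    minMaxDeg (boxPower 3 k) = 2 := by
  exact minMaxDeg_boxPower_three' k hk
end

section
/- Let n ≥ 1 and k ≥ 1 be integers, and let β > 0 be a real root of the polynomial g_n such that g_n has no root in the open interval (0,β). Then f(P_{2n}^k) ≥ ⌈√(kβ)⌉, where f(G) = min{Δ(G[S]) : S ⊆ V(G), |S| = α(G)+1}. -/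
open Finset

/-- The polynomial sequence `g_0(x) = 1`, `g_1(x) = x - 1`,
`g_k(x) = (x-2) g_{k-1}(x) - g_{k-2}(x)`. -/
noncomputable def gPoly : ℕ → ℝ → ℝ
  | 0, _ => 1
  | 1, x => x - 1
  | (k + 2), x => (x - 2) * gPoly (k + 1) x - gPoly k x

noncomputable section HG
open scoped Classical

namespace HG

variable {n k : ℕ}

/-- the partner of a vertex of the path `P_{2n}`: pairs `{0,1},{2,3},…`. -/
def pa (a : Fin (2*n)) : Fin (2*n) :=
  ⟨if a.val % 2 = 0 then a.val + 1 else a.val - 1, by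
    rcases a with ⟨a, ha⟩; dsimp; split <;> omega⟩

lemma pa_val (a : Fin (2*n)) :
    (pa a).val = if a.val % 2 = 0 then a.val + 1 else a.val - 1 := rfl

lemma pa_pa (a : Fin (2*n)) : pa (pa a) = a := by
  apply Fin.ext; rw [pa_val, pa_val]
  rcases a with ⟨a, ha⟩; dsimp; split <;> split <;> omega

lemma pa_ne (a : Fin (2*n)) : pa a ≠ a := by
  intro h
  have := congrArg Fin.val h
  rw [pa_val] at this
  rcases a with ⟨a, ha⟩; dsimp at this; split at this <;> omega

lemma pa_adj (a : Fin (2*n)) : (pathGraph' (2*n)).Adj a (pa a) := by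
  show (a:ℕ) + 1 = ((pa a):ℕ) ∨ ((pa a):ℕ) + 1 = (a:ℕ)
  rw [pa_val]
  rcases a with ⟨a, ha⟩; dsimp; split <;> omega

/-- sign of a path vertex -/
def sgn (a : Fin (2*n)) : ℝ := if a.val % 2 = 0 then 1 else -1

lemma sgn_pa (a : Fin (2*n)) : sgn (pa a) = - sgn a := by
  unfold sgn
  rw [pa_val]
  rcases a with ⟨a, ha⟩; dsimp
  by_cases h : a % 2 = 0
  · have h1 : ¬ ((a+1) % 2 = 0) := by omega
    simp [h, h1]
  · have h1 : (a-1) % 2 = 0 := by omega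
    simp [h, h1]

lemma abs_sgn (a : Fin (2*n)) : |sgn a| = 1 := by
  unfold sgn; split <;> simp

lemma sgn_sq (a : Fin (2*n)) : sgn a * sgn a = 1 := by
  unfold sgn; split <;> norm_num

/-- flip coordinate `i` -/
def flip (i : Fin k) (u : Fin k → Fin (2*n)) : Fin k → Fin (2*n) :=
  Function.update u i (pa (u i))

lemma flip_apply_self (i : Fin k) (u : Fin k → Fin (2*n)) : flip i u i = pa (u i) := by
  simp [flip]

lemma flip_apply_ne (i j : Fin k) (u : Fin k → Fin (2*n)) (h : j ≠ i) : flip i u j = u j := by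
  simp [flip, Function.update_of_ne h]

lemma flip_flip (i : Fin k) (u : Fin k → Fin (2*n)) : flip i (flip i u) = u := by
  funext j
  by_cases h : j = i
  · subst h; rw [flip_apply_self, flip_apply_self, pa_pa]
  · rw [flip_apply_ne _ _ _ h, flip_apply_ne _ _ _ h]

lemma flip_ne (i : Fin k) (u : Fin k → Fin (2*n)) : flip i u ≠ u := by
  intro h
  have := congrFun h i
  rw [flip_apply_self] at this
  exact pa_ne _ this

lemma flip_comm (i j : Fin k) (h : i ≠ j) (u : Fin k → Fin (2*n)) :
    flip j (flip i u) = flip i (flip j u) := by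
  funext t
  by_cases ht : i = t
  · subst ht
    rw [flip_apply_ne j i (flip i u) h, flip_apply_self i u, flip_apply_self i (flip j u),
      flip_apply_ne j i u h]
  · by_cases ht2 : j = t
    · subst ht2
      rw [flip_apply_self j (flip i u), flip_apply_ne i j u (Ne.symm h),
        flip_apply_ne i j (flip j u) (Ne.symm h), flip_apply_self j u]
    · rw [flip_apply_ne j t (flip i u) (fun hh => ht2 hh.symm),
        flip_apply_ne i t u (fun hh => ht hh.symm),
        flip_apply_ne i t (flip j u) (fun hh => ht hh.symm),
        flip_apply_ne j t u (fun hh => ht2 hh.symm)]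

lemma flip_flip_eq_iff (i j : Fin k) (u : Fin k → Fin (2*n)) :
    flip j (flip i u) = u ↔ i = j := by
  constructor
  · intro h
    by_contra hne
    have := congrFun h i
    rw [flip_apply_ne j i (flip i u) hne, flip_apply_self i u] at this
    exact pa_ne _ this
  · intro h; subst h; exact flip_flip i u

lemma adj_flip (i : Fin k) (u : Fin k → Fin (2*n)) :
    (boxPower (2*n) k).Adj u (flip i u) := by
  refine ⟨i, ?_, ?_⟩
  · rw [flip_apply_self]; exact pa_adj _
  · intro j hj; exact (flip_apply_ne i j u hj).symm


variable (β : ℝ)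

/-- entry weight -/
def eps (i : Fin k) (u : Fin k → Fin (2*n)) : ℝ :=
  Real.sqrt β * ∏ t ∈ univ.filter (fun t => t < i), sgn (u t)

lemma eps_flip_of_not_lt (i j : Fin k) (u : Fin k → Fin (2*n)) (h : ¬ j < i) :
    eps β i (flip j u) = eps β i u := by
  unfold eps
  congr 1
  apply Finset.prod_congr rfl
  intro t ht
  rw [mem_filter] at ht
  rw [flip_apply_ne j t u (by rintro rfl; exact h ht.2)]

lemma eps_flip_of_lt (i j : Fin k) (u : Fin k → Fin (2*n)) (h : j < i) :
    eps β i (flip j u) = - eps β i u := by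
  unfold eps
  have hmem : j ∈ univ.filter (fun t => t < i) := by simp [h]
  rw [← Finset.mul_prod_erase _ (fun t => sgn (flip j u t)) hmem,
      ← Finset.mul_prod_erase _ (fun t => sgn (u t)) hmem]
  have h1 : ∏ t ∈ (univ.filter (fun t => t < i)).erase j, sgn (flip j u t)
      = ∏ t ∈ (univ.filter (fun t => t < i)).erase j, sgn (u t) :=
    Finset.prod_congr rfl (fun t ht => by
      rw [flip_apply_ne j t u (Finset.ne_of_mem_erase ht)])
  rw [h1, flip_apply_self j u, sgn_pa]
  ring

lemma eps_sq (i : Fin k) (u : Fin k → Fin (2*n)) (hβ : 0 ≤ β) :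
    eps β i u * eps β i u = β := by
  unfold eps
  rw [show ∀ a b : ℝ, (a * b) * (a * b) = (a*a) * (b*b) from by intros; ring]
  rw [← Finset.prod_mul_distrib]
  rw [Finset.prod_congr rfl (fun t _ => sgn_sq (u t))]
  simp [Real.mul_self_sqrt hβ]

lemma abs_eps (i : Fin k) (u : Fin k → Fin (2*n)) :
    |eps β i u| = Real.sqrt β := by
  unfold eps
  rw [abs_mul, abs_prod]
  rw [Finset.prod_congr rfl (fun t _ => abs_sgn (u t))]
  simp [abs_of_nonneg (Real.sqrt_nonneg β)]

/-- The pseudo-adjacency matrix. -/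
def Amat : Matrix (Fin k → Fin (2*n)) (Fin k → Fin (2*n)) ℝ :=
  fun u w => ∑ i : Fin k, if w = flip i u then eps β i u else 0

lemma Amat_apply (u w : Fin k → Fin (2*n)) :
    Amat β u w = ∑ i : Fin k, if w = flip i u then eps β i u else 0 := rfl

lemma Amat_eq_zero_of_not_adj (u w : Fin k → Fin (2*n))
    (h : ¬ (boxPower (2*n) k).Adj u w) : Amat β u w = 0 := by
  rw [Amat_apply]
  apply Finset.sum_eq_zero
  intro i _
  rw [if_neg]
  rintro rfl
  exact h (adj_flip i u)

lemma flip_inj (i j : Fin k) (u : Fin k → Fin (2*n)) (h : flip i u = flip j u) : i = j := by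
  by_contra hne
  have h1 := congrFun h i
  rw [flip_apply_self i u, flip_apply_ne j i u hne] at h1
  exact pa_ne _ h1

lemma abs_Amat_le (u w : Fin k → Fin (2*n)) : |Amat β u w| ≤ Real.sqrt β := by
  by_cases h : ∃ i, w = flip i u
  · obtain ⟨i₀, hi₀⟩ := h
    rw [Amat_apply, Finset.sum_eq_single i₀]
    · rw [if_pos hi₀, abs_eps]
    · intro j _ hj
      rw [if_neg]
      rintro rfl
      exact hj (flip_inj j i₀ u hi₀)
    · intro h; exact absurd (mem_univ i₀) h
  · rw [Amat_apply, Finset.sum_eq_zero, abs_zero]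
    · exact Real.sqrt_nonneg β
    · intro i _
      rw [if_neg (fun hh => h ⟨i, hh⟩)]

theorem Amat_sq (hβ : 0 ≤ β) (hkk : True) :
    Amat β * Amat β = ((k : ℝ) * β) • (1 : Matrix (Fin k → Fin (2*n)) (Fin k → Fin (2*n)) ℝ) := by
  ext u w
  rw [Matrix.mul_apply]
  have hterm : ∀ v, Amat β u v * Amat β v w
      = ∑ i : Fin k, (if v = flip i u then eps β i u * Amat β v w else 0) := by
    intro v
    rw [Amat_apply, Finset.sum_mul]
    apply Finset.sum_congr rfl
    intro i _
    split <;> simp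
  rw [Finset.sum_congr rfl (fun v _ => hterm v), Finset.sum_comm]
  have hcollapse : ∀ i : Fin k,
      (∑ v, if v = flip i u then eps β i u * Amat β v w else 0)
        = eps β i u * Amat β (flip i u) w := by
    intro i
    rw [Finset.sum_ite_eq' univ (flip i u) (fun v => eps β i u * Amat β v w)]
    simp
  rw [Finset.sum_congr rfl (fun i _ => hcollapse i)]
  have hexp : ∀ i : Fin k, eps β i u * Amat β (flip i u) w
      = ∑ j : Fin k, (if w = flip j (flip i u) then eps β i u * eps β j (flip i u) else 0) := by
    intro i
    rw [Amat_apply, Finset.mul_sum]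
    apply Finset.sum_congr rfl
    intro j _
    split <;> simp
  rw [Finset.sum_congr rfl (fun i _ => hexp i)]
  rw [← Finset.sum_product']
  by_cases huw : u = w
  · subst huw
    rw [Matrix.smul_apply, Matrix.one_apply_eq, smul_eq_mul, mul_one]
    rw [Finset.sum_congr rfl (f := fun p : Fin k × Fin k => _) (g := fun p : Fin k × Fin k =>
      if p.1 = p.2 then β else 0) ?_]
    · rw [Finset.sum_product]
      have hrow : ∀ i : Fin k, (∑ j : Fin k, if i = j then β else 0) = β := fun i => by simp
      rw [Finset.sum_congr rfl (fun i _ => hrow i)]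
      simp [mul_comm]
    · intro p _
      rcases p with ⟨i, j⟩
      dsimp
      by_cases hij : i = j
      · subst hij
        rw [if_pos rfl, if_pos (flip_flip i u).symm, eps_flip_of_not_lt β i i u (lt_irrefl i),
          eps_sq β i u hβ]
      · rw [if_neg hij, if_neg (fun hcon => hij ((flip_flip_eq_iff i j u).mp hcon.symm))]
  · rw [Matrix.smul_apply, Matrix.one_apply_ne (fun hc => huw hc), smul_eq_mul, mul_zero]
    apply Finset.sum_involution (fun p _ => (p.2, p.1))
    · rintro ⟨i, j⟩ -
      dsimp
      by_cases hij : i = j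
      · subst hij
        have hcc : ¬ (w = flip i (flip i u)) := by
          rw [flip_flip]; exact fun hc => huw hc.symm
        rw [if_neg hcc]; norm_num
      · by_cases hcond : w = flip j (flip i u)
        · have hcond2 : w = flip i (flip j u) := by rw [← flip_comm i j hij u]; exact hcond
          rw [if_pos hcond, if_pos hcond2]
          rcases lt_or_gt_of_ne hij with hlt | hgt
          · rw [eps_flip_of_lt β j i u hlt, eps_flip_of_not_lt β i j u (by omega)]
            ring
          · rw [eps_flip_of_not_lt β j i u (by omega), eps_flip_of_lt β i j u hgt]
            ring
        · have hcond2 : ¬ (w = flip i (flip j u)) := by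
            rw [← flip_comm i j hij u]; exact hcond
          rw [if_neg hcond, if_neg hcond2, add_zero]
    · rintro ⟨i, j⟩ - hne hc
      apply hne
      have hij : j = i := congrArg Prod.fst hc
      subst hij
      dsimp
      rw [flip_flip, if_neg (fun hcon => huw hcon.symm)]
    · rintro ⟨i, j⟩ -; exact mem_univ _
    · rintro ⟨i, j⟩ -; rfl


lemma exists_flip_of_ne_zero (u w : Fin k → Fin (2*n)) (h : Amat β u w ≠ 0) :
    ∃ i, w = flip i u := by
  by_contra hc
  push_neg at hc
  apply h
  rw [Amat_apply]
  exact Finset.sum_eq_zero (fun i _ => if_neg (hc i))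

/-- global sign function -/
def delta (u : Fin k → Fin (2*n)) : ℝ := if (∑ i, (u i).val) % 2 = 0 then 1 else -1

lemma delta_sq (u : Fin k → Fin (2*n)) : delta u * delta u = 1 := by
  unfold delta; split <;> norm_num

lemma sum_flip_eq (i : Fin k) (u : Fin k → Fin (2*n)) :
    ∑ j, (flip i u j).val = (pa (u i)).val + ∑ j ∈ univ.erase i, (u j).val := by
  rw [← Finset.add_sum_erase _ (fun j => (flip i u j).val) (mem_univ i)]
  congr 1
  · rw [flip_apply_self]
  · exact Finset.sum_congr rfl (fun t ht =>
      by rw [flip_apply_ne i t u (Finset.ne_of_mem_erase ht)])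

lemma pa_val_cases (a : Fin (2*n)) :
    (pa a).val = a.val + 1 ∨ (pa a).val + 1 = a.val := by
  rw [pa_val]; rcases a with ⟨a, ha⟩; dsimp; split <;> omega

lemma delta_flip (i : Fin k) (u : Fin k → Fin (2*n)) : delta (flip i u) = - delta u := by
  unfold delta
  have h := pa_val_cases (u i)
  have e1 : ∑ j, (flip i u j).val = (pa (u i)).val + ∑ j ∈ univ.erase i, (u j).val :=
    sum_flip_eq i u
  have e2 : ∑ j, (u j).val = (u i).val + ∑ j ∈ univ.erase i, (u j).val :=
    (Finset.add_sum_erase _ (fun j => (u j).val) (mem_univ i)).symm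
  rw [e1, e2]
  generalize (∑ j ∈ univ.erase i, (u j).val) = S at *
  rcases h with h | h <;> split_ifs with h1 h2 <;> try norm_num
  all_goals omega

lemma delta_entry (u w : Fin k → Fin (2*n)) :
    Amat β u w * delta w = -(delta u * Amat β u w) := by
  by_cases hz : Amat β u w = 0
  · simp [hz]
  · obtain ⟨i, rfl⟩ := exists_flip_of_ne_zero β u _ hz
    rw [delta_flip]
    ring

/-- candidate eigenspace -/
def Kp (μ : ℝ) : Submodule ℝ ((Fin k → Fin (2*n)) → ℝ) :=
  LinearMap.ker ((Amat β).mulVecLin - μ • LinearMap.id)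

lemma mem_Kp (μ : ℝ) (v : (Fin k → Fin (2*n)) → ℝ) :
    v ∈ Kp β μ ↔ (Amat β).mulVec v = μ • v := by
  rw [Kp, LinearMap.mem_ker, LinearMap.sub_apply, LinearMap.smul_apply, LinearMap.id_apply,
    sub_eq_zero, Matrix.mulVecLin_apply]

lemma Amat_mulVec_mulVec (hβ : 0 ≤ β) (v : (Fin k → Fin (2*n)) → ℝ) :
    (Amat β).mulVec ((Amat β).mulVec v) = ((k:ℝ) * β) • v := by
  rw [Matrix.mulVec_mulVec, Amat_sq β hβ trivial, Matrix.smul_mulVec, Matrix.one_mulVec]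

lemma Kp_sup (hβ : 0 < β) (lam : ℝ) (hlam : lam * lam = (k:ℝ)*β) (hlam0 : lam ≠ 0) :
    Kp (n := n) (k := k) β lam ⊔ Kp (n := n) (k := k) β (-lam) = ⊤ := by
  rw [eq_top_iff]
  rintro v -
  have hv : v = (2*lam)⁻¹ • (lam • v + (Amat β).mulVec v)
      + (2*lam)⁻¹ • (lam • v - (Amat β).mulVec v) := by
    funext u
    simp only [Pi.add_apply, Pi.smul_apply, Pi.sub_apply, smul_eq_mul]
    field_simp
    ring
  rw [hv]
  apply Submodule.add_mem_sup
  · apply Submodule.smul_mem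
    rw [mem_Kp]
    rw [Matrix.mulVec_add, Matrix.mulVec_smul, Amat_mulVec_mulVec β hβ.le, ← hlam]
    funext u
    simp only [Pi.add_apply, Pi.smul_apply, smul_eq_mul]
    ring
  · apply Submodule.smul_mem
    rw [mem_Kp]
    rw [Matrix.mulVec_sub, Matrix.mulVec_smul, Amat_mulVec_mulVec β hβ.le, ← hlam]
    funext u
    simp only [Pi.sub_apply, Pi.smul_apply, smul_eq_mul]
    ring

lemma Kp_inf (lam : ℝ) (hlam0 : lam ≠ 0) :
    Kp (n := n) (k := k) β lam ⊓ Kp (n := n) (k := k) β (-lam) = ⊥ := by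
  rw [eq_bot_iff]
  rintro v ⟨h1, h2⟩
  rw [SetLike.mem_coe, mem_Kp] at h1 h2
  rw [Submodule.mem_bot]
  funext u
  have e1 := congrFun (h1.symm.trans h2) u
  simp only [Pi.smul_apply, smul_eq_mul, neg_mul] at e1
  have : (2*lam) * v u = 0 := by linarith
  rcases mul_eq_zero.mp this with h | h
  · exact absurd (by linarith : lam = 0) hlam0
  · exact h

/-- conjugation by the global sign -/
def phiL : ((Fin k → Fin (2*n)) → ℝ) →ₗ[ℝ] ((Fin k → Fin (2*n)) → ℝ) where
  toFun v := fun u => delta u * v u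
  map_add' v w := by funext u; simp [mul_add]
  map_smul' c v := by funext u; simp [smul_eq_mul]; ring

lemma phiL_invol : Function.Involutive (phiL (n := n) (k := k)) := by
  intro v
  funext u
  show delta u * (delta u * v u) = v u
  rw [← mul_assoc, delta_sq, one_mul]

lemma phiL_mem_Kp (lam : ℝ) (v : (Fin k → Fin (2*n)) → ℝ) (hv : v ∈ Kp β lam) :
    phiL v ∈ Kp β (-lam) := by
  rw [mem_Kp] at hv ⊢
  funext u
  show ∑ w, Amat β u w * (delta w * v w) = _
  have : ∀ w, Amat β u w * (delta w * v w) = -(delta u) * (Amat β u w * v w) := by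
    intro w
    have hde := delta_entry β u w
    linear_combination v w * hde
  rw [Finset.sum_congr rfl (fun w _ => this w), ← Finset.mul_sum]
  have hAv : ∑ w, Amat β u w * v w = lam * v u := by
    have := congrFun hv u
    simpa [Matrix.mulVec, dotProduct] using this
  rw [hAv]
  show _ = (-lam) • (delta u * v u)
  simp only [smul_eq_mul]
  ring

lemma finrank_Kp_eq (lam : ℝ) :
    Module.finrank ℝ (Kp β (n := n) (k := k) lam)
      = Module.finrank ℝ (Kp β (n := n) (k := k) (-lam)) := by
  have hmap : (Kp β (n := n) (k := k) lam).map phiL = Kp β (-lam) := by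
    apply le_antisymm
    · rintro w ⟨v, hv, rfl⟩
      exact phiL_mem_Kp β lam v hv
    · intro v hv
      have h2 : phiL v ∈ Kp β (n := n) (k := k) (- -lam) := phiL_mem_Kp β (-lam) v hv
      rw [neg_neg] at h2
      exact ⟨phiL v, h2, phiL_invol v⟩
  rw [← hmap]
  let phiE : ((Fin k → Fin (2*n)) → ℝ) ≃ₗ[ℝ] ((Fin k → Fin (2*n)) → ℝ) :=
    LinearEquiv.ofInvolutive phiL phiL_invol
  have : (Kp β (n := n) (k := k) lam).map phiL = (Kp β (n := n) (k := k) lam).map (phiE : _ →ₗ[ℝ] _) := rfl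
  rw [this, LinearEquiv.finrank_map_eq phiE]


/-- vectors supported on S -/
def coordSub (S : Finset (Fin k → Fin (2*n))) : Submodule ℝ ((Fin k → Fin (2*n)) → ℝ) where
  carrier := {v | ∀ w, w ∉ S → v w = 0}
  add_mem' := by intro a b ha hb w hw; simp [Pi.add_apply, ha w hw, hb w hw]
  zero_mem' := by intro w hw; rfl
  smul_mem' := by intro c v hv w hw; simp [Pi.smul_apply, hv w hw]

def coordEquiv (S : Finset (Fin k → Fin (2*n))) :
    coordSub (n := n) (k := k) S ≃ₗ[ℝ] (↥S → ℝ) where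
  toFun v := fun w => v.1 w.1
  map_add' := by intros; rfl
  map_smul' := by intros; rfl
  invFun g := ⟨fun w => if h : w ∈ S then g ⟨w, h⟩ else 0, fun w hw => dif_neg hw⟩
  left_inv := by
    rintro ⟨v, hv⟩
    apply Subtype.ext
    funext w
    by_cases h : w ∈ S
    · simp [h]
    · simp [h, hv w h]
  right_inv := by
    intro g
    funext w
    simp [w.2]

lemma finrank_coordSub (S : Finset (Fin k → Fin (2*n))) :
    Module.finrank ℝ (coordSub (n := n) (k := k) S) = S.card := by
  rw [(coordEquiv S).finrank_eq, Module.finrank_pi, Fintype.card_coe]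

/-- an even-parity vertex class -/
def evenSet : Finset (Fin k → Fin (2*n)) :=
  univ.filter (fun u => (∑ i, (u i).val) % 2 = 0)

lemma adj_sum_parity (u v : Fin k → Fin (2*n)) (h : (boxPower (2*n) k).Adj u v) :
    (∑ i, (u i).val) % 2 ≠ (∑ i, (v i).val) % 2 := by
  obtain ⟨i, hadj, hoff⟩ := h
  have e1 : ∑ j, (u j).val = (u i).val + ∑ j ∈ univ.erase i, (u j).val :=
    (Finset.add_sum_erase _ (fun j => (u j).val) (mem_univ i)).symm
  have e2 : ∑ j, (v j).val = (v i).val + ∑ j ∈ univ.erase i, (u j).val := by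
    rw [← Finset.add_sum_erase _ (fun j => (v j).val) (mem_univ i)]
    congr 1
    exact Finset.sum_congr rfl (fun t ht => by
      rw [hoff t (Finset.ne_of_mem_erase ht)])
  have hadj' : (u i).val + 1 = (v i).val ∨ (v i).val + 1 = (u i).val := hadj
  rw [e1, e2]
  generalize (∑ j ∈ univ.erase i, (u j).val) = S at *
  rcases hadj' with h | h <;> omega

lemma evenSet_indep : IsIndepFinset (boxPower (2*n) k) (evenSet (n := n) (k := k)) := by
  intro u hu v hv hadj
  rw [evenSet, mem_filter] at hu hv
  exact adj_sum_parity u v hadj (hu.2.trans hv.2.symm)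

lemma two_mul_evenSet_card (hk : 0 < k) :
    2 * (evenSet (n := n) (k := k)).card = Fintype.card (Fin k → Fin (2*n)) := by
  classical
  set i0 : Fin k := ⟨0, hk⟩
  have hcard : (evenSet (n := n) (k := k)).card
      = (univ.filter (fun u : Fin k → Fin (2*n) => ¬ ((∑ i, (u i).val) % 2 = 0))).card := by
    apply Finset.card_bij' (fun u _ => flip i0 u) (fun u _ => flip i0 u)
    · intro u hu
      rw [evenSet, mem_filter] at hu
      rw [mem_filter]
      refine ⟨mem_univ _, ?_⟩
      have := adj_sum_parity u (flip i0 u) (adj_flip i0 u)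
      omega
    · intro u hu
      rw [mem_filter] at hu
      rw [evenSet, mem_filter]
      refine ⟨mem_univ _, ?_⟩
      have := adj_sum_parity u (flip i0 u) (adj_flip i0 u)
      omega
    · intro u _; exact flip_flip i0 u
    · intro u _; exact flip_flip i0 u
  have htot := Finset.card_filter_add_card_filter_not
    (p := fun u : Fin k → Fin (2*n) => (∑ i, (u i).val) % 2 = 0)
    (s := (univ : Finset (Fin k → Fin (2*n))))
  rw [Finset.card_univ] at htot
  have heq : (evenSet (n := n) (k := k))
      = univ.filter (fun u : Fin k → Fin (2*n) => (∑ i, (u i).val) % 2 = 0) := rfl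
  rw [heq] at hcard ⊢
  rw [← htot, two_mul, hcard]


lemma key (hk : 1 ≤ k) (hβpos : 0 < β) (hβ1 : β ≤ 1)
    (S : Finset (Fin k → Fin (2*n))) (hScard : (evenSet (n := n) (k := k)).card + 1 ≤ S.card) :
    ⌈Real.sqrt ((k : ℝ) * β)⌉₊ ≤ maxDegOn (boxPower (2*n) k) S := by
  have hk' : 0 < (k:ℝ) := by exact_mod_cast hk
  have hkβ : 0 < (k:ℝ) * β := mul_pos hk' hβpos
  set lam := Real.sqrt ((k:ℝ) * β) with hlamdef
  have hlam2 : lam * lam = (k:ℝ) * β := Real.mul_self_sqrt hkβ.le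
  have hlampos : 0 < lam := Real.sqrt_pos.mpr hkβ
  have hfr := Submodule.finrank_sup_add_finrank_inf_eq
    (Kp (n := n) (k := k) β lam) (Kp (n := n) (k := k) β (-lam))
  rw [Kp_sup β hβpos lam hlam2 hlampos.ne', Kp_inf β lam hlampos.ne', finrank_top, finrank_bot,
    Module.finrank_pi] at hfr
  have hfr2 := finrank_Kp_eq (n := n) (k := k) β lam
  have hEcard := two_mul_evenSet_card (n := n) (hk : 0 < k)
  have hint := Submodule.finrank_sup_add_finrank_inf_eq
    (Kp (n := n) (k := k) β lam) (coordSub S)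
  have hsuple := Submodule.finrank_le (Kp (n := n) (k := k) β lam ⊔ coordSub S)
  rw [Module.finrank_pi] at hsuple
  rw [finrank_coordSub] at hint
  have hpos : 0 < Module.finrank ℝ ↥(Kp (n := n) (k := k) β lam ⊓ coordSub S) := by omega
  have hnebot : (Kp (n := n) (k := k) β lam ⊓ coordSub S) ≠ ⊥ := by
    intro hbot
    rw [hbot, finrank_bot] at hpos
    exact lt_irrefl 0 hpos
  obtain ⟨v, hvmem, hvne⟩ := Submodule.ne_bot_iff _ |>.mp hnebot
  obtain ⟨hvK, hvC⟩ := Submodule.mem_inf.mp hvmem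
  have hSne : S.Nonempty := Finset.card_pos.mp (by omega)
  obtain ⟨u, huS, hmax⟩ := Finset.exists_max_image S (fun w => |v w|) hSne
  have hvu_pos : 0 < |v u| := by
    obtain ⟨w0, hw0⟩ : ∃ w, v w ≠ 0 := by
      by_contra hcon; push_neg at hcon; exact hvne (funext hcon)
    have hw0S : w0 ∈ S := by
      by_contra hcon; exact hw0 (hvC w0 hcon)
    calc (0:ℝ) < |v w0| := abs_pos.mpr hw0
    _ ≤ |v u| := hmax w0 hw0S
  set T := S.filter (fun w => (boxPower (2*n) k).Adj u w) with hT
  have hsum : (Amat β).mulVec v u = lam * v u := by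
    rw [(mem_Kp β lam v).mp hvK]; simp
  have e0 : (Amat β).mulVec v u = ∑ w ∈ T, Amat β u w * v w := by
    have : (Amat β).mulVec v u = ∑ w, Amat β u w * v w := by
      simp [Matrix.mulVec, dotProduct]
    rw [this]
    refine (Finset.sum_subset (Finset.subset_univ T) ?_).symm
    intro w _ hwT
    by_cases hwS : w ∈ S
    · have hnadj : ¬ (boxPower (2*n) k).Adj u w := by
        intro hadj; exact hwT (Finset.mem_filter.mpr ⟨hwS, hadj⟩)
      rw [Amat_eq_zero_of_not_adj β u w hnadj, zero_mul]
    · rw [hvC w hwS, mul_zero]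
  have habs : |∑ w ∈ T, Amat β u w * v w| ≤ (T.card : ℝ) * (Real.sqrt β * |v u|) := by
    refine (Finset.abs_sum_le_sum_abs _ _).trans ?_
    have hle : ∀ w ∈ T, |Amat β u w * v w| ≤ Real.sqrt β * |v u| := by
      intro w hw
      rw [abs_mul]
      exact mul_le_mul (abs_Amat_le β u w) (hmax w (Finset.mem_filter.mp hw).1)
        (abs_nonneg _) (Real.sqrt_nonneg β)
    calc ∑ w ∈ T, |Amat β u w * v w| ≤ ∑ _w ∈ T, Real.sqrt β * |v u| :=
        Finset.sum_le_sum hle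
    _ = (T.card : ℝ) * (Real.sqrt β * |v u|) := by
        rw [Finset.sum_const, nsmul_eq_mul]
  have hstep : lam * |v u| ≤ (T.card : ℝ) * (Real.sqrt β * |v u|) := by
    calc lam * |v u| = |lam * v u| := by rw [abs_mul, abs_of_pos hlampos]
    _ = |∑ w ∈ T, Amat β u w * v w| := by rw [← e0, hsum]
    _ ≤ _ := habs
  have hsqrtk : Real.sqrt k ≤ (T.card : ℝ) := by
    have hβs : 0 < Real.sqrt β := Real.sqrt_pos.mpr hβpos
    have h1 : lam = Real.sqrt k * Real.sqrt β := Real.sqrt_mul hk'.le β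
    have hx : 0 < Real.sqrt β * |v u| := mul_pos hβs hvu_pos
    have h2 : Real.sqrt k * (Real.sqrt β * |v u|) ≤ (T.card : ℝ) * (Real.sqrt β * |v u|) := by
      calc Real.sqrt k * (Real.sqrt β * |v u|) = (Real.sqrt k * Real.sqrt β) * |v u| := by ring
      _ = lam * |v u| := by rw [← h1]
      _ ≤ _ := hstep
    exact le_of_mul_le_mul_right h2 hx
  have hfin : ⌈Real.sqrt ((k:ℝ) * β)⌉₊ ≤ T.card := by
    apply Nat.ceil_le.mpr
    refine le_trans ?_ hsqrtk
    apply Real.sqrt_le_sqrt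
    nlinarith
  refine hfin.trans ?_
  exact Finset.le_sup (f := fun x => (S.filter fun w => (boxPower (2*n) k).Adj x w).card) huS

lemma evenSet_card_le_indepNum :
    (evenSet (n := n) (k := k)).card ≤ indepNum (boxPower (2*n) k) := by
  apply le_csSup
  · refine ⟨Fintype.card (Fin k → Fin (2*n)), ?_⟩
    rintro x ⟨S, -, rfl⟩
    rw [← Finset.card_univ]
    exact Finset.card_le_univ S
  · exact ⟨evenSet, evenSet_indep, rfl⟩

lemma indepNum_add_one_le (hn : 1 ≤ n) (hk : 1 ≤ k) :
    indepNum (boxPower (2*n) k) + 1 ≤ Fintype.card (Fin k → Fin (2*n)) := by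
  have hnonempty : Nonempty (Fin k → Fin (2*n)) := ⟨fun _ => ⟨0, by omega⟩⟩
  have hpos : 0 < Fintype.card (Fin k → Fin (2*n)) := Fintype.card_pos
  have hub : indepNum (boxPower (2*n) k) ≤ Fintype.card (Fin k → Fin (2*n)) - 1 := by
    apply csSup_le
    · exact ⟨0, ∅, by intro u hu; exact absurd hu (Finset.notMem_empty u), rfl⟩
    · rintro x ⟨S, hSindep, rfl⟩
      have hle : S.card ≤ Fintype.card (Fin k → Fin (2*n)) := by
        rw [← Finset.card_univ]; exact Finset.card_le_univ S
      rcases eq_or_lt_of_le hle with heq | hlt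
      · exfalso
        have huniv : S = univ := Finset.eq_univ_of_card S heq
        set u0 : Fin k → Fin (2*n) := fun _ => ⟨0, by omega⟩
        set i0 : Fin k := ⟨0, hk⟩
        exact hSindep u0 (huniv ▸ mem_univ u0) (flip i0 u0) (huniv ▸ mem_univ (flip i0 u0))
          (adj_flip i0 u0)
      · omega
  omega

end HG
end HG


lemma gPoly_trig : ∀ (m : ℕ) (t : ℝ),
    gPoly m (2 + 2 * Real.cos t) * Real.sin (t/2) = Real.sin ((2*m+1) * (t/2))
  | 0, t => by simp [gPoly]
  | 1, t => by
      have h1 : (2*((1:ℕ):ℝ)+1) * (t/2) = t + t/2 := by push_cast; ring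
      rw [show gPoly 1 (2 + 2*Real.cos t) = 1 + 2*Real.cos t from by simp [gPoly]; ring,
        h1, Real.sin_add]
      have h2 : Real.sin t = 2 * Real.sin (t/2) * Real.cos (t/2) := by
        have := Real.sin_two_mul (t/2); rw [← this]; ring_nf
      have h3 : Real.cos t = 2 * Real.cos (t/2)^2 - 1 := by
        have := Real.cos_two_mul (t/2); rw [← this]; ring_nf
      rw [h2]; linear_combination Real.sin (t/2) * h3
  | (m+2), t => by
      have ih1 := gPoly_trig (m+1) t
      have ih0 := gPoly_trig m t
      have key : Real.sin ((2*((m+2:ℕ):ℝ)+1) * (t/2))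
          = 2 * Real.cos t * Real.sin ((2*((m+1:ℕ):ℝ)+1)*(t/2)) - Real.sin ((2*(m:ℝ)+1)*(t/2)) := by
        have e1 := Real.sin_add ((2*(m:ℝ)+3)*(t/2)) t
        have e2 := Real.sin_sub ((2*(m:ℝ)+3)*(t/2)) t
        have a1 : (2*((m+2:ℕ):ℝ)+1) * (t/2) = (2*(m:ℝ)+3)*(t/2) + t := by push_cast; ring
        have a2 : (2*(m:ℝ)+1) * (t/2) = (2*(m:ℝ)+3)*(t/2) - t := by ring
        have a3 : (2*((m+1:ℕ):ℝ)+1) * (t/2) = (2*(m:ℝ)+3)*(t/2) := by push_cast; ring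
        rw [a1, a2, a3, e1, e2]; ring
      show ((2 + 2*Real.cos t - 2) * gPoly (m+1) (2 + 2*Real.cos t) - gPoly m (2 + 2*Real.cos t)) * Real.sin (t/2) = _
      rw [key, ← ih1, ← ih0]; ring

/-- g_n has the root 2 - 2 cos(π/(2n+1)), which lies in (0,1]. -/
lemma gPoly_small_root (n : ℕ) (hn : 1 ≤ n) :
    ∃ x : ℝ, 0 < x ∧ x ≤ 1 ∧ gPoly n x = 0 := by
  set θ : ℝ := Real.pi / (2*n+1) with hθ
  have hpi := Real.pi_pos
  have h2n1 : (0:ℝ) < 2*n+1 := by positivity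
  have hθpos : 0 < θ := by positivity
  have hθle : θ ≤ Real.pi / 3 := by
    rw [hθ]; apply div_le_div_of_nonneg_left hpi.le (by norm_num)
    have : (1:ℝ) ≤ (n:ℝ) := by exact_mod_cast hn
    linarith
  set t : ℝ := Real.pi - θ with ht
  have hx : 2 + 2 * Real.cos t = 2 - 2 * Real.cos θ := by
    rw [ht, Real.cos_pi_sub]; ring
  refine ⟨2 + 2 * Real.cos t, ?_, ?_, ?_⟩
  · rw [hx]
    have : Real.cos θ < 1 := by
      have h3 : θ ≤ Real.pi := by linarith
      have := Real.cos_lt_cos_of_nonneg_of_le_pi (le_refl 0) h3 hθpos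
      simpa using this
    linarith
  · rw [hx]
    have : (1:ℝ)/2 ≤ Real.cos θ := by
      have hc : Real.cos (Real.pi/3) ≤ Real.cos θ := by
        apply Real.cos_le_cos_of_nonneg_of_le_pi hθpos.le ?_ hθle
        linarith
      rw [Real.cos_pi_div_three] at hc; linarith
    linarith
  · have h0 := gPoly_trig n t
    have hsin0 : Real.sin ((2*n+1) * (t/2)) = 0 := by
      have : (2*(n:ℝ)+1) * (t/2) = n * Real.pi := by
        rw [ht, hθ]; field_simp; ring
      rw [this]
      exact Real.sin_nat_mul_pi n
    have hsinne : Real.sin (t/2) ≠ 0 := by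
      apply ne_of_gt
      apply Real.sin_pos_of_pos_of_lt_pi
      · rw [ht]
        have : θ < Real.pi := by
          calc θ ≤ Real.pi/3 := hθle
          _ < Real.pi := by linarith
        linarith
      · rw [ht]; linarith
    have := h0.trans hsin0
    exact (mul_eq_zero.mp this).resolve_right hsinne


/-- Let `n ≥ 1`, `k ≥ 1`, and let `β > 0` be a root of `g_n` such that `g_n` has no
root in `(0, β)`. Then `f(P_{2n}^k) ≥ ⌈√(kβ)⌉`. -/
theorem minMaxDeg_boxPower_even_lower (n k : ℕ) (hn : 1 ≤ n) (hk : 1 ≤ k)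
    (β : ℝ) (hβpos : 0 < β) (hroot : gPoly n β = 0)
    (hmin : ∀ x : ℝ, 0 < x → x < β → gPoly n x ≠ 0) :
    ⌈Real.sqrt (k * β)⌉₊ ≤ minMaxDeg (boxPower (2 * n) k) := by
  have hβ1 : β ≤ 1 := by
    obtain ⟨x0, hx0pos, hx0le, hx0root⟩ := gPoly_small_root n hn
    by_contra hcon
    push_neg at hcon
    exact hmin x0 hx0pos (lt_of_le_of_lt hx0le hcon) hx0root
  apply le_csInf
  · obtain ⟨S, -, hScard⟩ := Finset.exists_subset_card_eq
      (s := (univ : Finset (Fin k → Fin (2*n)))) (n := indepNum (boxPower (2*n) k) + 1)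
      (by rw [Finset.card_univ]; exact HG.indepNum_add_one_le hn hk)
    exact ⟨maxDegOn (boxPower (2*n) k) S, S, hScard, rfl⟩
  · rintro d ⟨S, hScard, rfl⟩
    apply HG.key β hk hβpos hβ1 S
    have := HG.evenSet_card_le_indepNum (n := n) (k := k)
    omega
end

section
/- For all integers n ≥ 2 and k ≥ 1, there exists a set S of vertices of P_{2n+1}^k with |S| = ((2n+1)^k + 1)/2 + 1 = α(P_{2n+1}^k) + 1 such that the induced subgraph P_{2n+1}^k[S] has maximum degree exactly 1. -/
open Finset

/-- partner of a nonzero element of `Fin (2n+1)`: odd ↦ +1, even ↦ -1. -/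
def pr (n : ℕ) (x : Fin (2*n+1)) : Fin (2*n+1) :=
  if h : (x:ℕ) % 2 = 1 then ⟨(x:ℕ)+1, by have := x.isLt; omega⟩
  else ⟨(x:ℕ)-1, by have := x.isLt; omega⟩

lemma pr_val_odd (n : ℕ) (x : Fin (2*n+1)) (h : (x:ℕ) % 2 = 1) :
    (pr n x : ℕ) = (x:ℕ) + 1 := by simp [pr, h]

lemma pr_val_even (n : ℕ) (x : Fin (2*n+1)) (h : (x:ℕ) % 2 ≠ 1) :
    (pr n x : ℕ) = (x:ℕ) - 1 := by simp [pr, h]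

lemma pr_pr (n : ℕ) (x : Fin (2*n+1)) (hx : x ≠ 0) : pr n (pr n x) = x := by
  have hx' : (x:ℕ) ≠ 0 := fun h => hx (Fin.ext (by simpa using h))
  have hlt := x.isLt
  apply Fin.ext
  by_cases h : (x:ℕ) % 2 = 1
  · have h1 := pr_val_odd n x h
    have h2 : ((pr n x : ℕ)) % 2 ≠ 1 := by omega
    rw [pr_val_even n _ h2, h1]; omega
  · have h1 := pr_val_even n x h
    have h2 : ((pr n x : ℕ)) % 2 = 1 := by omega
    rw [pr_val_odd n _ h2, h1]; omega

lemma pr_ne_zero (n : ℕ) (x : Fin (2*n+1)) (hx : x ≠ 0) : pr n x ≠ 0 := by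
  have hx' : (x:ℕ) ≠ 0 := fun h => hx (Fin.ext (by simpa using h))
  intro h
  have h0 : (pr n x : ℕ) = 0 := by simpa using congrArg Fin.val h
  by_cases h2 : (x:ℕ) % 2 = 1
  · rw [pr_val_odd n x h2] at h0; omega
  · rw [pr_val_even n x h2] at h0; omega

lemma pr_rel (n : ℕ) (x : Fin (2*n+1)) (hx : x ≠ 0) :
    (x:ℕ) + 1 = (pr n x : ℕ) ∨ (pr n x : ℕ) + 1 = (x:ℕ) := by
  have hx' : (x:ℕ) ≠ 0 := fun h => hx (Fin.ext (by simpa using h))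
  by_cases h2 : (x:ℕ) % 2 = 1
  · left; rw [pr_val_odd n x h2]
  · right; rw [pr_val_even n x h2]; omega

variable {n K : ℕ}

/-- support -/
def supp (u : Fin K → Fin (2*n+1)) : Finset (Fin K) := univ.filter (fun i => u i ≠ 0)

noncomputable def mu (u : Fin K → Fin (2*n+1)) : Fin K → Fin (2*n+1) :=
  if h : (supp u).Nonempty then
    Function.update u ((supp u).min' h) (pr n (u ((supp u).min' h)))
  else u

lemma supp_nonempty_iff (u : Fin K → Fin (2*n+1)) :
    (supp u).Nonempty ↔ u ≠ (fun _ => 0) := by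
  constructor
  · rintro ⟨i, hi⟩ h
    simp [supp] at hi
    exact hi (by rw [h])
  · intro h
    by_contra hne
    apply h
    funext i
    by_contra hi
    exact hne ⟨i, by simp [supp, hi]⟩

section mu_props
variable (u : Fin K → Fin (2*n+1))

lemma mu_def (h : (supp u).Nonempty) : mu u = Function.update u ((supp u).min' h) (pr n (u ((supp u).min' h))) := by
  simp [mu, h]

lemma min_mem_supp (h : (supp u).Nonempty) : u ((supp u).min' h) ≠ 0 := by
  have := (supp u).min'_mem h
  simpa [supp] using this

lemma supp_mu (h : (supp u).Nonempty) : (supp (mu u)).Nonempty := by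
  refine ⟨(supp u).min' h, ?_⟩
  have hne : (mu u) ((supp u).min' h) ≠ 0 := by
    rw [mu_def u h, Function.update_self]
    exact pr_ne_zero n _ (min_mem_supp u h)
  simpa [supp] using hne

lemma min_supp_mu (h : (supp u).Nonempty) : (supp (mu u)).min' (supp_mu u h) = (supp u).min' h := by
  set i0 := (supp u).min' h with hi0
  apply le_antisymm
  · apply min'_le
    have hne : (mu u) i0 ≠ 0 := by
      rw [mu_def u h, hi0, Function.update_self]
      exact pr_ne_zero n _ (min_mem_supp u h)
    simpa [supp] using hne
  · apply le_min'
    intro y hy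
    simp only [supp, mem_filter, mem_univ, true_and] at hy
    by_cases hyi : y = i0
    · exact le_of_eq hyi.symm
    · rw [mu_def u h, ← hi0, Function.update_of_ne hyi] at hy
      exact min'_le _ _ (by simp [supp, hy])

lemma mu_mu (h : (supp u).Nonempty) : mu (mu u) = u := by
  have h2 := supp_mu u h
  rw [mu_def (mu u) h2, min_supp_mu u h]
  rw [mu_def u h, Function.update_self]
  rw [Function.update_idem, pr_pr n _ (min_mem_supp u h)]
  exact Function.update_eq_self _ _

lemma mu_ne (v : Fin K → Fin (2*n+1)) (hv : v ≠ (fun _ => 0)) : mu v ≠ (fun _ => 0) := by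
  have h := (supp_nonempty_iff v).2 hv
  exact (supp_nonempty_iff (mu v)).1 (supp_mu v h)

end mu_props


lemma mu_adj (u : Fin K → Fin (2*n+1)) (h : (supp u).Nonempty) :
    (boxPower (2*n+1) K).Adj u (mu u) := by
  refine ⟨(supp u).min' h, ?_, ?_⟩
  · rw [mu_def u h, Function.update_self]
    exact pr_rel n _ (min_mem_supp u h)
  · intro j hj
    rw [mu_def u h, Function.update_of_ne hj]

lemma adj_sum_parity {m K : ℕ} (u v : Fin K → Fin m)
    (huv : (boxPower m K).Adj u v) :
    ((∑ i, (u i : ℕ)) + (∑ i, (v i : ℕ))) % 2 = 1 := by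
  obtain ⟨i, hpath, hoff⟩ := huv
  have hu : ∑ l, (u l : ℕ) = (u i : ℕ) + ∑ l ∈ univ.erase i, (u l : ℕ) :=
    (Finset.add_sum_erase univ _ (mem_univ i)).symm
  have hv : ∑ l, (v l : ℕ) = (v i : ℕ) + ∑ l ∈ univ.erase i, (v l : ℕ) :=
    (Finset.add_sum_erase univ _ (mem_univ i)).symm
  have heq : ∑ l ∈ univ.erase i, (u l : ℕ) = ∑ l ∈ univ.erase i, (v l : ℕ) := by
    apply Finset.sum_congr rfl
    intro x hx
    rw [hoff x (Finset.ne_of_mem_erase hx)]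
  rcases hpath with h1 | h1 <;> omega

/-- number of even-sum vectors -/
lemma card_even_sum (n : ℕ) : ∀ K : ℕ,
    (univ.filter (fun u : Fin K → Fin (2*n+1) => (∑ i, (u i : ℕ)) % 2 = 0)).card
      = ((2*n+1)^K + 1) / 2 := by
  intro K
  set E := univ.filter (fun u : Fin K → Fin (2*n+1) => (∑ i, (u i : ℕ)) % 2 = 0) with hE
  set O := univ.filter (fun u : Fin K → Fin (2*n+1) => ¬ ((∑ i, (u i : ℕ)) % 2 = 0)) with hO
  have htot : E.card + O.card = (2*n+1)^K := by
    rw [hE, hO, Finset.card_filter_add_card_filter_not]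
    simp [Fintype.card_fun]
  have hz : (fun _ => 0 : Fin K → Fin (2*n+1)) ∈ E := by simp [hE]
  have hcard : (E.erase (fun _ => 0)).card = O.card := by
    apply Finset.card_bij' (fun u _ => mu u) (fun u _ => mu u)
    · intro u hu
      simp only [Finset.mem_erase, hE, mem_filter, mem_univ, true_and] at hu
      obtain ⟨hne, heven⟩ := hu
      have h := (supp_nonempty_iff u).2 hne
      have := adj_sum_parity u (mu u) (mu_adj u h)
      simp only [hO, mem_filter, mem_univ, true_and]
      omega
    · intro u hu
      simp only [hO, mem_filter, mem_univ, true_and] at hu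
      have hne : u ≠ (fun _ => 0) := by
        intro hc; rw [hc] at hu; simp at hu
      have h := (supp_nonempty_iff u).2 hne
      have := adj_sum_parity u (mu u) (mu_adj u h)
      simp only [Finset.mem_erase, hE, mem_filter, mem_univ, true_and]
      exact ⟨mu_ne u hne, by omega⟩
    · intro u hu
      simp only [Finset.mem_erase] at hu
      exact mu_mu u ((supp_nonempty_iff u).2 hu.1)
    · intro u hu
      simp only [hO, mem_filter, mem_univ, true_and] at hu
      have hne : u ≠ (fun _ => 0) := by
        intro hc; rw [hc] at hu; simp at hu
      exact mu_mu u ((supp_nonempty_iff u).2 hne)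
  have hE1 : E.card = (E.erase (fun _ => 0)).card + 1 := by
    rw [Finset.card_erase_of_mem hz]
    have : 1 ≤ E.card := Finset.card_pos.2 ⟨_, hz⟩
    omega
  omega


lemma card_odd_sum (n j : ℕ) :
    (univ.filter (fun w : Fin j → Fin (2*n+1) => ¬ ((∑ i, (w i : ℕ)) % 2 = 0))).card
      = (2*n+1)^j - ((2*n+1)^j + 1)/2 := by
  have htot : (univ.filter (fun w : Fin j → Fin (2*n+1) =>
        (∑ i, (w i : ℕ)) % 2 = 0)).card
      + (univ.filter (fun w : Fin j → Fin (2*n+1) =>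
        ¬ ((∑ i, (w i : ℕ)) % 2 = 0))).card = (2*n+1)^j := by
    rw [Finset.card_filter_add_card_filter_not]
    simp [Fintype.card_fun]
  have h := Nat.eq_sub_of_add_eq' htot
  rw [card_even_sum n j] at h
  exact h

lemma indep_card_le (T : Finset (Fin K → Fin (2*n+1)))
    (hT : IsIndepFinset (boxPower (2*n+1) K) T) :
    T.card ≤ ((2*n+1)^K + 1) / 2 := by
  classical
  set z : Fin K → Fin (2*n+1) := (fun _ => 0) with hz
  set T' := T.erase z with hT'
  set U := T'.image mu with hU
  have hinj : Set.InjOn mu (T' : Set (Fin K → Fin (2*n+1))) := by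
    intro a ha b hb hab
    simp only [hT', Finset.coe_erase, Set.mem_diff, Set.mem_singleton_iff] at ha hb
    have ha2 := (supp_nonempty_iff a).2 ha.2
    have hb2 := (supp_nonempty_iff b).2 hb.2
    rw [← mu_mu a ha2, hab, mu_mu b hb2]
  have hcardU : U.card = T'.card := Finset.card_image_of_injOn hinj
  have hdisj : Disjoint T' U := by
    rw [Finset.disjoint_right]
    intro x hx hx'
    simp only [hU, Finset.mem_image] at hx
    obtain ⟨w, hw, hwx⟩ := hx
    have hwne : w ≠ z := Finset.ne_of_mem_erase hw
    have hadj := mu_adj w ((supp_nonempty_iff w).2 hwne)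
    rw [hwx] at hadj
    exact hT w (Finset.mem_of_mem_erase hw) x (Finset.mem_of_mem_erase hx') hadj
  have hsub : T' ∪ U ⊆ univ.erase z := by
    intro x hx
    rcases Finset.mem_union.1 hx with hx | hx
    · exact Finset.mem_erase.2 ⟨Finset.ne_of_mem_erase hx, mem_univ x⟩
    · simp only [hU, Finset.mem_image] at hx
      obtain ⟨w, hw, hwx⟩ := hx
      have hwne : w ≠ z := Finset.ne_of_mem_erase hw
      exact Finset.mem_erase.2 ⟨hwx ▸ mu_ne w hwne, mem_univ _⟩
  have hle : T'.card + U.card ≤ (univ.erase z).card := by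
    rw [← Finset.card_union_of_disjoint hdisj]
    exact Finset.card_le_card hsub
  have huniv : (univ.erase z).card = (2*n+1)^K - 1 := by
    rw [Finset.card_erase_of_mem (mem_univ z)]
    simp [Fintype.card_fun]
  have hTT : T.card ≤ T'.card + 1 := by
    rw [hT']
    by_cases hzT : z ∈ T
    · rw [Finset.card_erase_of_mem hzT]; omega
    · rw [Finset.erase_eq_of_notMem hzT]; omega
  have hpow : 1 ≤ (2*n+1)^K := Nat.one_le_pow _ _ (by omega)
  omega

lemma evenset_indep (n K : ℕ) :
    IsIndepFinset (boxPower (2*n+1) K)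
      (univ.filter (fun u : Fin K → Fin (2*n+1) => (∑ i, (u i : ℕ)) % 2 = 0)) := by
  intro u hu v hv hadj
  simp only [mem_filter] at hu hv
  have := adj_sum_parity u v hadj
  omega

lemma indepNum_eq_s8 (n K : ℕ) :
    indepNum (boxPower (2*n+1) K) = ((2*n+1)^K + 1) / 2 := by
  have hmem : ((2*n+1)^K + 1) / 2 ∈
      {s | ∃ S : Finset (Fin K → Fin (2*n+1)),
        IsIndepFinset (boxPower (2*n+1) K) S ∧ S.card = s} :=
    ⟨_, evenset_indep n K, card_even_sum n K⟩
  have hbdd : ∀ s ∈ {s | ∃ S : Finset (Fin K → Fin (2*n+1)),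
        IsIndepFinset (boxPower (2*n+1) K) S ∧ S.card = s}, s ≤ ((2*n+1)^K + 1) / 2 := by
    rintro s ⟨S, hS, rfl⟩
    exact indep_card_le S hS
  apply le_antisymm
  · exact csSup_le ⟨_, hmem⟩ hbdd
  · exact le_csSup ⟨_, hbdd⟩ hmem


def cpat (t : ℕ) : ℕ := if t = 1 then 0 else if t = 2 then 1 else if t = 3 then 0 else t % 2

lemma cpat_le (t : ℕ) : cpat t ≤ 1 := by unfold cpat; split_ifs <;> omega

lemma cpat_triple (t : ℕ) (h1 : 1 ≤ t) (ha : cpat (t-1) = cpat t)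
    (hb : cpat (t+1) = cpat t) : False := by
  unfold cpat at ha hb
  split_ifs at ha hb <;> omega

/-- the special set -/
def Sset (n j : ℕ) : Finset (Fin (j+1) → Fin (2*n+1)) :=
  univ.filter (fun u => (cpat (u 0 : ℕ) + ∑ i : Fin j, (u i.succ : ℕ)) % 2 = 0)

lemma mem_Sset {n j : ℕ} (u : Fin (j+1) → Fin (2*n+1)) :
    u ∈ Sset n j ↔ (cpat (u 0 : ℕ) + ∑ i : Fin j, (u i.succ : ℕ)) % 2 = 0 := by
  simp [Sset]

lemma cpat_zero_count (n : ℕ) (hn : 2 ≤ n) :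
    (univ.filter (fun x : Fin (2*n+1) => cpat (x:ℕ) = 0)).card = n + 2 := by
  rw [Finset.card_filter]
  rw [Fin.sum_univ_eq_sum_range (fun t => if cpat t = 0 then 1 else 0) (2*n+1)]
  induction n, hn using Nat.le_induction with
  | base => rw [show 2*2+1 = 5 from rfl]; decide
  | succ n hn ih =>
    have h1 : 2*(n+1)+1 = (2*n+1) + 1 + 1 := by ring
    rw [h1, Finset.sum_range_succ, Finset.sum_range_succ, ih]
    have h2 : cpat (2*n+1) = 1 := by
      unfold cpat; rw [if_neg (by omega), if_neg (by omega), if_neg (by omega)]; omega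
    have h3 : cpat (2*n+1+1) = 0 := by
      unfold cpat; rw [if_neg (by omega), if_neg (by omega), if_neg (by omega)]; omega
    rw [h2, h3]
    simp


lemma parity_aux (s : ℕ) : ((1 + s) % 2 = 0) ↔ ¬ (s % 2 = 0) := by omega

lemma card_Sset_aux (n j : ℕ) (hn : 2 ≤ n) :
    (Sset n j).card = (n+2) * (((2*n+1)^j + 1)/2)
      + (n-1) * ((2*n+1)^j - ((2*n+1)^j + 1)/2) := by
  set Ec := ((2*n+1)^j + 1)/2 with hEc
  set Tset := univ.filter
    (fun p : Fin (2*n+1) × (Fin j → Fin (2*n+1)) =>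
      (cpat (p.1 : ℕ) + ∑ i : Fin j, (p.2 i : ℕ)) % 2 = 0) with hTset
  -- |Sset| = |Tset|
  have h1 : (Sset n j).card = Tset.card := by
    apply Finset.card_bij' (fun u _ => (u 0, fun i => u i.succ))
      (fun p _ => Fin.cons p.1 p.2)
    · intro u hu
      rw [mem_Sset] at hu
      simp only [hTset, mem_filter, mem_univ, true_and]
      exact hu
    · intro u _
      exact Fin.cons_self_tail u
    · intro p _
      simp
    · intro p hp
      simp only [hTset, mem_filter, mem_univ, true_and] at hp
      rw [mem_Sset]
      simpa using hp
  rw [h1]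
  -- fiberwise over first coordinate
  have h2 : Tset.card = ∑ x : Fin (2*n+1), (Tset.filter (fun p => p.1 = x)).card :=
    Finset.card_eq_sum_card_fiberwise (fun p _ => mem_univ p.1)
  rw [h2]
  -- each fiber
  have h3 : ∀ x : Fin (2*n+1),
      (Tset.filter (fun p => p.1 = x)).card
        = if cpat (x:ℕ) = 0 then Ec else ((2*n+1)^j - Ec) := by
    intro x
    have hfib : (Tset.filter (fun p => p.1 = x)).card
        = (univ.filter (fun w : Fin j → Fin (2*n+1) =>
            (cpat (x:ℕ) + ∑ i, (w i : ℕ)) % 2 = 0)).card := by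
      apply Finset.card_bij' (fun p _ => p.2) (fun w _ => (x, w))
      · intro p hp
        simp only [hTset, Finset.filter_filter, mem_filter, mem_univ, true_and] at hp
        simp only [mem_filter, mem_univ, true_and]
        rw [← hp.2]; exact hp.1
      · rintro ⟨p1, p2⟩ hp
        simp only [hTset, Finset.filter_filter, mem_filter, mem_univ, true_and] at hp
        simp [hp.2]
      · intro w _
        rfl
      · intro w hw
        simp only [mem_filter, mem_univ, true_and] at hw
        simp only [hTset, Finset.filter_filter, mem_filter, mem_univ, true_and]
        simpa using hw
    rw [hfib]
    by_cases hc : cpat (x:ℕ) = 0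
    · rw [if_pos hc, hEc, ← card_even_sum n j]
      have hset : (univ.filter (fun w : Fin j → Fin (2*n+1) =>
            (cpat (x:ℕ) + ∑ i, (w i : ℕ)) % 2 = 0))
          = (univ.filter (fun w : Fin j → Fin (2*n+1) => (∑ i, (w i : ℕ)) % 2 = 0)) := by
        ext w
        simp only [mem_filter, mem_univ, true_and]
        rw [hc, Nat.zero_add]
      rw [hset]
    · have hc1 : cpat (x:ℕ) = 1 :=
        Nat.le_antisymm (cpat_le _) (Nat.one_le_iff_ne_zero.2 hc)
      rw [if_neg hc]
      have heq : (univ.filter (fun w : Fin j → Fin (2*n+1) =>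
          (cpat (x:ℕ) + ∑ i, (w i : ℕ)) % 2 = 0)).card
          = (univ.filter (fun w : Fin j → Fin (2*n+1) =>
            ¬ ((∑ i, (w i : ℕ)) % 2 = 0))).card := by
        congr 1
        ext w
        simp only [mem_filter, mem_univ, true_and]
        rw [hc1]
        exact parity_aux _
      rw [heq, hEc]
      exact card_odd_sum n j
  rw [Finset.sum_congr rfl (fun x _ => h3 x)]
  rw [Finset.sum_ite, Finset.sum_const, Finset.sum_const, smul_eq_mul, smul_eq_mul]
  rw [cpat_zero_count n hn]
  have hneg : (univ.filter (fun x : Fin (2*n+1) => ¬ cpat (x:ℕ) = 0)).card = n - 1 := by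
    have h4 := Finset.card_filter_add_card_filter_not
      (s := (univ : Finset (Fin (2*n+1)))) (p := fun x => cpat (x:ℕ) = 0)
    rw [cpat_zero_count n hn] at h4
    simp only [Finset.card_univ, Fintype.card_fin] at h4
    have h5 := Nat.eq_sub_of_add_eq' h4
    rw [h5]
    clear h5 h4 h3 h2 h1
    omega
  rw [hneg]

lemma card_Sset (n j : ℕ) (hn : 2 ≤ n) :
    (Sset n j).card = ((2*n+1)^(j+1) + 1)/2 + 1 := by
  rw [card_Sset_aux n j hn]
  obtain ⟨p, rfl⟩ : ∃ p, n = p + 2 := ⟨n - 2, by omega⟩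
  have hodd : Odd ((2*(p+2)+1)^j) := Odd.pow (by exact ⟨p+2, by ring⟩)
  obtain ⟨q, hq⟩ := hodd
  rw [pow_succ]
  rw [hq]
  have e1 : (2*q+1+1)/2 = q + 1 := by omega
  have e2 : 2*q+1 - (q+1) = q := by omega
  have e3 : (2*q+1) * (2*(p+2)+1) + 1 = 2 * (2*p*q + 5*q + p + 3) := by ring
  rw [e1, e2, e3]
  have e4 : 2 * (2*p*q + 5*q + p + 3) / 2 = 2*p*q + 5*q + p + 3 := by omega
  rw [e4]
  have e5 : p + 2 - 1 = p + 1 := by omega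
  rw [e5]
  ring


lemma cpat_eq_of (c1 c2 T1 T2 : ℕ) (h1 : c1 ≤ 1) (h2 : c2 ≤ 1) (hT : T1 = T2)
    (e1 : (c1 + T1) % 2 = 0) (e2 : (c2 + T2) % 2 = 0) : c1 = c2 := by omega

lemma no_cross (cv ca x y R1 R2 : ℕ) (hc : cv = ca) (hR : R1 = R2)
    (hx : x + 1 = y ∨ y + 1 = x)
    (e1 : (cv + (x + R1)) % 2 = 0) (e2 : (ca + (y + R2)) % 2 = 0) : False := by omega

lemma head_unique (t x y : ℕ) (hx : t + 1 = x ∨ x + 1 = t) (hy : t + 1 = y ∨ y + 1 = t)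
    (hcx : cpat x = cpat t) (hcy : cpat y = cpat t) : x = y := by
  rcases hx with hx | hx <;> rcases hy with hy | hy
  · omega
  · exfalso
    apply cpat_triple t (by omega)
    · rw [show t - 1 = y by omega]; exact hcy
    · rw [show t + 1 = x from hx]; exact hcx
  · exfalso
    apply cpat_triple t (by omega)
    · rw [show t - 1 = x by omega]; exact hcx
    · rw [show t + 1 = y from hy]; exact hcy
  · omega

lemma Sset_adj_struct {n j : ℕ} (v a : Fin (j+1) → Fin (2*n+1))
    (hv : v ∈ Sset n j) (ha : a ∈ Sset n j)
    (hadj : (boxPower (2*n+1) (j+1)).Adj v a) :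
    (∀ i, i ≠ 0 → v i = a i) ∧
    ((v 0 : ℕ) + 1 = (a 0 : ℕ) ∨ (a 0 : ℕ) + 1 = (v 0 : ℕ)) ∧
    cpat (a 0 : ℕ) = cpat (v 0 : ℕ) := by
  rw [mem_Sset] at hv ha
  obtain ⟨i, hpath, hoff⟩ := hadj
  by_cases hi : i = 0
  · subst hi
    have hts : ∑ l : Fin j, (v l.succ : ℕ) = ∑ l : Fin j, (a l.succ : ℕ) :=
      Finset.sum_congr rfl (fun l _ => by rw [hoff l.succ (Fin.succ_ne_zero l)])
    refine ⟨fun i hi2 => hoff i hi2, hpath, ?_⟩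
    exact cpat_eq_of _ _ _ _ (cpat_le _) (cpat_le _) hts.symm ha hv
  · exfalso
    obtain ⟨i', rfl⟩ := Fin.eq_succ_of_ne_zero hi
    have h00 : v 0 = a 0 := hoff 0 (Fin.succ_ne_zero i').symm
    have hvs : ∑ l : Fin j, (v l.succ : ℕ)
        = (v i'.succ : ℕ) + ∑ l ∈ univ.erase i', (v l.succ : ℕ) :=
      (Finset.add_sum_erase univ _ (mem_univ i')).symm
    have has : ∑ l : Fin j, (a l.succ : ℕ)
        = (a i'.succ : ℕ) + ∑ l ∈ univ.erase i', (a l.succ : ℕ) :=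
      (Finset.add_sum_erase univ _ (mem_univ i')).symm
    have hrest : ∑ l ∈ univ.erase i', (v l.succ : ℕ)
        = ∑ l ∈ univ.erase i', (a l.succ : ℕ) := by
      apply Finset.sum_congr rfl
      intro l hl
      rw [hoff l.succ (fun hcon => Finset.ne_of_mem_erase hl (Fin.succ_injective _ hcon))]
    rw [hvs] at hv
    rw [has] at ha
    exact no_cross _ _ _ _ _ _ (by rw [h00]) hrest hpath hv ha

lemma Sset_deg_unique {n j : ℕ} (v a b : Fin (j+1) → Fin (2*n+1))
    (hv : v ∈ Sset n j) (ha : a ∈ Sset n j) (hb : b ∈ Sset n j)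
    (hadja : (boxPower (2*n+1) (j+1)).Adj v a)
    (hadjb : (boxPower (2*n+1) (j+1)).Adj v b) : a = b := by
  obtain ⟨hoffa, hxa, hca⟩ := Sset_adj_struct v a hv ha hadja
  obtain ⟨hoffb, hxb, hcb⟩ := Sset_adj_struct v b hv hb hadjb
  funext i
  by_cases hi : i = 0
  · subst hi
    exact Fin.ext (head_unique (v 0 : ℕ) _ _ hxa hxb hca hcb)
  · rw [← hoffa i hi, ← hoffb i hi]

lemma maxDegOn_Sset (n j : ℕ) (hn : 2 ≤ n) :
    maxDegOn (boxPower (2*n+1) (j+1)) (Sset n j) = 1 := by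
  classical
  have hone : (1 : Fin (2*n+1)) = ⟨1, by omega⟩ := by
    apply Fin.ext
    simp [Fin.val_one']
    omega
  set v0 : Fin (j+1) → Fin (2*n+1) := (fun _ => 0) with hv0
  set v1 : Fin (j+1) → Fin (2*n+1) := Function.update v0 0 ⟨1, by omega⟩ with hv1
  have hv0m : v0 ∈ Sset n j := by
    rw [mem_Sset]
    simp [hv0, cpat]
  have hv1m : v1 ∈ Sset n j := by
    rw [mem_Sset]
    have h0 : (v1 0 : ℕ) = 1 := by rw [hv1, Function.update_self]
    have hs : ∀ l : Fin j, (v1 l.succ : ℕ) = 0 := by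
      intro l
      rw [hv1, Function.update_of_ne (Fin.succ_ne_zero l)]
      simp [hv0]
    rw [h0]
    rw [Finset.sum_congr rfl (fun l _ => hs l)]
    simp [cpat]
  have hadj01 : (boxPower (2*n+1) (j+1)).Adj v0 v1 := by
    refine ⟨0, ?_, ?_⟩
    · left
      rw [hv1, Function.update_self]
      simp [hv0]
    · intro l hl
      rw [hv1, Function.update_of_ne hl]
  apply le_antisymm
  · apply Finset.sup_le
    intro v hv
    rw [Finset.card_le_one]
    intro a ha b hb
    rw [Finset.mem_filter] at ha hb
    exact Sset_deg_unique v a b hv ha.1 hb.1 ha.2 hb.2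
  · calc (1 : ℕ) ≤ ((Sset n j).filter
        (fun u => (boxPower (2*n+1) (j+1)).Adj v0 u)).card := by
          apply Finset.card_pos.2
          exact ⟨v1, Finset.mem_filter.2 ⟨hv1m, hadj01⟩⟩
    _ ≤ _ := Finset.le_sup
      (f := fun v => ((Sset n j).filter
        (fun u => (boxPower (2*n+1) (j+1)).Adj v u)).card) hv0m


/-- For `n ≥ 2` and `k ≥ 1`, there is a set `S` of vertices of `P_{2n+1}^k` with
`|S| = ((2n+1)^k + 1)/2 + 1 = α(P_{2n+1}^k) + 1` whose induced subgraph has maximum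
degree exactly `1`. -/
theorem exists_set_maxDeg_one (n k : ℕ) (hn : 2 ≤ n) (hk : 1 ≤ k) :
    ∃ S : Finset (Fin k → Fin (2 * n + 1)),
      S.card = ((2 * n + 1) ^ k + 1) / 2 + 1 ∧
      S.card = indepNum (boxPower (2 * n + 1) k) + 1 ∧
      maxDegOn (boxPower (2 * n + 1) k) S = 1 := by
  obtain ⟨j, rfl⟩ : ∃ j, k = j + 1 := ⟨k - 1, by omega⟩
  refine ⟨Sset n j, card_Sset n j hn, ?_, maxDegOn_Sset n j hn⟩
  rw [indepNum_eq_s8 n (j+1)]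
  exact card_Sset n j hn
end

section
/- Let A_1 = [[0,1,0],[1,0,−1],[0,−1,0]] and for k ≥ 1 let A_{k+1} = A_1 ⊗ I_{3^k} + diag(1,−1,1) ⊗ A_k (Kronecker products), a symmetric 3^k × 3^k matrix for each k. Then for every k ≥ 1: (i) 0 is an eigenvalue of A_k and has multiplicity 1 as a root of the characteristic polynomial of A_k; (ii) if λ is an eigenvalue of A_k then so is −λ; (iii) every positive eigenvalue of A_k is at least √2, and √2 is an eigenvalue of A_k. -/
open Kronecker Matrix

/-- A matrix `M` has real eigenvalue `μ` if `M x = μ x` for some nonzero vector `x`. -/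
def HasEig {I : Type*} [Fintype I] (M : Matrix I I ℝ) (μ : ℝ) : Prop :=
  ∃ x : I → ℝ, x ≠ 0 ∧ M.mulVec x = μ • x

/-- `A_1 = [[0,1,0],[1,0,−1],[0,−1,0]]`, a signed adjacency matrix of `P_3`. -/
def matA1 : Matrix (Fin 3) (Fin 3) ℝ := !![0, 1, 0; 1, 0, -1; 0, -1, 0]

/-- `D = diag(1,−1,1)`. -/
def matD3 : Matrix (Fin 3) (Fin 3) ℝ := !![1, 0, 0; 0, -1, 0; 0, 0, 1]

/-- The signed adjacency matrices of `P_3^k`: `AP3 0 = A_1` and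
`AP3 (k+1) = A_1 ⊗ I_{3^k} + D ⊗ AP3 k` (Kronecker products), so `AP3 k` is the
matrix `A_{k+1}` of the paper; it is indexed by `Fin (k+1) → Fin 3`, a type of
cardinality `3^(k+1)`. -/
noncomputable def AP3 : (k : ℕ) → Matrix (Fin (k + 1) → Fin 3) (Fin (k + 1) → Fin 3) ℝ
  | 0 => Matrix.reindex (Equiv.funUnique (Fin 1) (Fin 3)).symm
      (Equiv.funUnique (Fin 1) (Fin 3)).symm matA1
  | (k + 1) =>
      Matrix.reindex (Fin.consEquiv fun _ : Fin (k + 2) => Fin 3)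
        (Fin.consEquiv fun _ : Fin (k + 2) => Fin 3)
        (matA1 ⊗ₖ (1 : Matrix (Fin (k + 1) → Fin 3) (Fin (k + 1) → Fin 3) ℝ)
          + matD3 ⊗ₖ AP3 k)


lemma AP3_zero_apply (x y : Fin 1 → Fin 3) : AP3 0 x y = matA1 (x 0) (y 0) := by
  simp [AP3, Matrix.reindex_apply, Equiv.funUnique]

lemma AP3_succ_apply (k : ℕ) (x y : Fin (k + 2) → Fin 3) :
    AP3 (k + 1) x y = matA1 (x 0) (y 0) * (if Fin.tail x = Fin.tail y then 1 else 0)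
      + matD3 (x 0) (y 0) * AP3 k (Fin.tail x) (Fin.tail y) := by
  simp [AP3, Matrix.reindex_apply, Fin.consEquiv, Matrix.one_apply]

lemma AP3_zero_mulVec (v : (Fin 1 → Fin 3) → ℝ) (x : Fin 1 → Fin 3) :
    (AP3 0).mulVec v x = ∑ j : Fin 3, matA1 (x 0) j * v (fun _ => j) := by
  rw [Matrix.mulVec, dotProduct,
    ← Equiv.sum_comp (Equiv.funUnique (Fin 1) (Fin 3)).symm]
  refine Finset.sum_congr rfl fun j _ => ?_
  rw [AP3_zero_apply]
  rfl

lemma matD3_eq (i j : Fin 3) : matD3 i j = if i = j then matD3 i i else 0 := by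
  fin_cases i <;> fin_cases j <;> norm_num [matD3, Fin.ext_iff]

lemma AP3_succ_mulVec (k : ℕ) (v : (Fin (k + 2) → Fin 3) → ℝ) (i : Fin 3)
    (t : Fin (k + 1) → Fin 3) :
    (AP3 (k + 1)).mulVec v (Fin.cons i t)
      = (∑ j : Fin 3, matA1 i j * v (Fin.cons j t))
        + matD3 i i * (AP3 k).mulVec (fun s => v (Fin.cons i s)) t := by
  rw [Matrix.mulVec, dotProduct,
    ← Equiv.sum_comp (Fin.consEquiv fun _ : Fin (k + 2) => Fin 3)]
  rw [Fintype.sum_prod_type]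
  have : ∀ (j : Fin 3) (s : Fin (k+1) → Fin 3),
      AP3 (k+1) (Fin.cons i t) ((Fin.consEquiv fun _ : Fin (k + 2) => Fin 3) (j, s))
        * v ((Fin.consEquiv fun _ : Fin (k + 2) => Fin 3) (j, s))
      = (matA1 i j * (if t = s then 1 else 0)
          + (if i = j then matD3 i i else 0) * AP3 k t s) * v (Fin.cons j s) := by
    intro j s
    rw [show (Fin.consEquiv fun _ : Fin (k + 2) => Fin 3) (j, s) = Fin.cons j s from rfl,
      AP3_succ_apply, ← matD3_eq]
    simp [Fin.tail_cons]
  simp only [this, add_mul, Finset.sum_add_distrib]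
  congr 1
  · refine Finset.sum_congr rfl fun j _ => ?_
    rw [Finset.sum_eq_single t]
    · simp
    · intro s _ hs; simp [if_neg (Ne.symm hs)]
    · intro h; exact absurd (Finset.mem_univ t) h
  · rw [Finset.sum_eq_single i]
    · rw [Matrix.mulVec, dotProduct, Finset.mul_sum]
      refine Finset.sum_congr rfl fun s _ => ?_
      simp; ring
    · intro j _ hj
      simp [if_neg (Ne.symm hj)]
    · intro h; exact absurd (Finset.mem_univ i) h

lemma mulVec_succ_zero (k : ℕ) (v : (Fin (k + 2) → Fin 3) → ℝ) (t : Fin (k + 1) → Fin 3) :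
    (AP3 (k + 1)).mulVec v (Fin.cons 0 t)
      = v (Fin.cons 1 t) + (AP3 k).mulVec (fun s => v (Fin.cons 0 s)) t := by
  rw [AP3_succ_mulVec]; norm_num [matA1, matD3, Fin.sum_univ_three, Matrix.cons_val_two, Matrix.tail_cons, Matrix.head_cons]

lemma mulVec_succ_one (k : ℕ) (v : (Fin (k + 2) → Fin 3) → ℝ) (t : Fin (k + 1) → Fin 3) :
    (AP3 (k + 1)).mulVec v (Fin.cons 1 t)
      = v (Fin.cons 0 t) - v (Fin.cons 2 t) - (AP3 k).mulVec (fun s => v (Fin.cons 1 s)) t := by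
  rw [AP3_succ_mulVec]; norm_num [matA1, matD3, Fin.sum_univ_three, Matrix.cons_val_two, Matrix.tail_cons, Matrix.head_cons]; ring

lemma mulVec_succ_two (k : ℕ) (v : (Fin (k + 2) → Fin 3) → ℝ) (t : Fin (k + 1) → Fin 3) :
    (AP3 (k + 1)).mulVec v (Fin.cons 2 t)
      = - v (Fin.cons 1 t) + (AP3 k).mulVec (fun s => v (Fin.cons 2 s)) t := by
  rw [AP3_succ_mulVec]; norm_num [matA1, matD3, Fin.sum_univ_three, Matrix.cons_val_two, Matrix.tail_cons, Matrix.head_cons]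

lemma AP3_isSymm (k : ℕ) : (AP3 k)ᵀ = AP3 k := by
  induction k with
  | zero =>
      ext x y
      rw [Matrix.transpose_apply, AP3_zero_apply, AP3_zero_apply]
      have : ∀ i j : Fin 3, matA1 i j = matA1 j i := by
        intro i j; fin_cases i <;> fin_cases j <;> norm_num [matA1]
      exact this _ _
  | succ k ih =>
      ext x y
      rw [Matrix.transpose_apply, AP3_succ_apply, AP3_succ_apply]
      have hA : ∀ i j : Fin 3, matA1 i j = matA1 j i := by
        intro i j; fin_cases i <;> fin_cases j <;> norm_num [matA1]
      have hD : ∀ i j : Fin 3, matD3 i j = matD3 j i := by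
        intro i j; fin_cases i <;> fin_cases j <;> norm_num [matD3]
      rw [hA, hD, ← Matrix.transpose_apply (AP3 k), ih]
      congr 2
      simp [eq_comm]

lemma dot_mulVec_symm (k : ℕ) (x y : (Fin (k + 1) → Fin 3) → ℝ) :
    x ⬝ᵥ ((AP3 k).mulVec y) = ((AP3 k).mulVec x) ⬝ᵥ y := by
  rw [Matrix.dotProduct_mulVec, ← Matrix.mulVec_transpose, AP3_isSymm]

lemma dot_self_nonneg {n : Type*} [Fintype n] (v : n → ℝ) : 0 ≤ v ⬝ᵥ v :=
  Finset.sum_nonneg fun i _ => mul_self_nonneg _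

lemma sq_eig_nonneg (k : ℕ) {x : (Fin (k + 1) → Fin 3) → ℝ} {c : ℝ} (hx : x ≠ 0)
    (h : (AP3 k).mulVec ((AP3 k).mulVec x) = c • x) : 0 ≤ c := by
  have hxx : 0 < x ⬝ᵥ x := by
    rcases lt_or_eq_of_le (dot_self_nonneg x) with h' | h'
    · exact h'
    · exact absurd (dotProduct_self_eq_zero.mp h'.symm) hx
  have h1 : x ⬝ᵥ ((AP3 k).mulVec ((AP3 k).mulVec x)) = ((AP3 k).mulVec x) ⬝ᵥ ((AP3 k).mulVec x) :=
    dot_mulVec_symm k x _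
  rw [h, dotProduct_smul] at h1
  have h2 : 0 ≤ ((AP3 k).mulVec x) ⬝ᵥ ((AP3 k).mulVec x) := dot_self_nonneg _
  rw [smul_eq_mul] at h1
  nlinarith [h1, h2, hxx]

lemma mulVec_mulVec_eq_zero (k : ℕ) {x : (Fin (k + 1) → Fin 3) → ℝ}
    (h : (AP3 k).mulVec ((AP3 k).mulVec x) = 0) : (AP3 k).mulVec x = 0 := by
  have h1 : x ⬝ᵥ ((AP3 k).mulVec ((AP3 k).mulVec x)) = ((AP3 k).mulVec x) ⬝ᵥ ((AP3 k).mulVec x) :=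
    dot_mulVec_symm k x _
  rw [h, dotProduct_zero] at h1
  exact dotProduct_self_eq_zero.mp h1.symm

def zv : Fin 3 → ℝ := ![1, 0, 1]
def dvv : Fin 3 → ℝ := ![1, -1, 1]
noncomputable def uv : Fin 3 → ℝ := ![1, Real.sqrt 2, -1]

def kerVec (k : ℕ) : (Fin (k + 1) → Fin 3) → ℝ := fun x => ∏ i, zv (x i)
noncomputable def sqVec (k : ℕ) : (Fin (k + 1) → Fin 3) → ℝ :=
  fun x => uv (x 0) * ∏ i : Fin k, zv (x i.succ)
def sgnV (k : ℕ) : (Fin (k + 1) → Fin 3) → ℝ := fun x => ∏ i, dvv (x i)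

lemma kerVec_cons (k : ℕ) (i : Fin 3) (t : Fin (k + 1) → Fin 3) :
    kerVec (k + 1) (Fin.cons i t) = zv i * kerVec k t := by
  simp [kerVec, Fin.prod_univ_succ]

lemma sqVec_cons (k : ℕ) (i : Fin 3) (t : Fin (k + 1) → Fin 3) :
    sqVec (k + 1) (Fin.cons i t) = uv i * kerVec k t := by
  simp [sqVec, kerVec]

lemma sgnV_cons (k : ℕ) (i : Fin 3) (t : Fin (k + 1) → Fin 3) :
    sgnV (k + 1) (Fin.cons i t) = dvv i * sgnV k t := by
  simp [sgnV, Fin.prod_univ_succ]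

lemma kerVec_ne_zero (k : ℕ) : kerVec k ≠ 0 := by
  intro h
  have := congrFun h (fun _ => 0)
  simp [kerVec, zv] at this

lemma sqVec_ne_zero (k : ℕ) : sqVec k ≠ 0 := by
  intro h
  have := congrFun h (fun _ => 0)
  simp [sqVec, zv, uv] at this

lemma sgnV_sq (k : ℕ) (x : Fin (k + 1) → Fin 3) : sgnV k x * sgnV k x = 1 := by
  rw [sgnV, ← Finset.prod_mul_distrib]
  rw [Finset.prod_eq_one]
  intro i _
  have : ∀ j : Fin 3, dvv j * dvv j = 1 := by intro j; fin_cases j <;> norm_num [dvv]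
  exact this _

lemma sgnV_ne_zero (k : ℕ) (x : Fin (k + 1) → Fin 3) : sgnV k x ≠ 0 := by
  intro h
  have := sgnV_sq k x
  rw [h] at this; norm_num at this

lemma A1_row_z (i : Fin 3) : ∑ j : Fin 3, matA1 i j * zv j = 0 := by
  fin_cases i <;> norm_num [matA1, zv, Fin.sum_univ_three, Matrix.cons_val_two, Matrix.tail_cons, Matrix.head_cons]

lemma A1_row_u (i : Fin 3) : ∑ j : Fin 3, matA1 i j * uv j = Real.sqrt 2 * uv i := by
  have h2 : Real.sqrt 2 * Real.sqrt 2 = 2 := Real.mul_self_sqrt (by norm_num)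
  fin_cases i <;> norm_num [matA1, uv, Fin.sum_univ_three, Matrix.cons_val_two, Matrix.tail_cons, Matrix.head_cons] <;> nlinarith [h2]

lemma A1_row_d (i : Fin 3) (w : Fin 3 → ℝ) :
    ∑ j : Fin 3, matA1 i j * (dvv j * w j) = -dvv i * ∑ j : Fin 3, matA1 i j * w j := by
  fin_cases i <;> norm_num [matA1, dvv, Fin.sum_univ_three, Matrix.cons_val_two, Matrix.tail_cons, Matrix.head_cons] <;> ring

lemma matD3_diag (i : Fin 3) : matD3 i i = dvv i := by
  fin_cases i <;> norm_num [matD3, dvv]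

lemma slices_eq {k : ℕ} {x y : (Fin (k + 2) → Fin 3) → ℝ}
    (h : ∀ i t, x (Fin.cons i t) = y (Fin.cons i t)) : x = y := by
  funext w
  have := h (w 0) (Fin.tail w)
  rwa [Fin.cons_self_tail] at this

lemma AP3_mulVec_kerVec (k : ℕ) : (AP3 k).mulVec (kerVec k) = 0 := by
  induction k with
  | zero =>
      funext x
      rw [AP3_zero_mulVec]
      have : ∀ j : Fin 3, kerVec 0 (fun _ => j) = zv j := by
        intro j; simp [kerVec]
      simp only [this]
      rw [A1_row_z]; rfl
  | succ k ih =>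
      refine slices_eq fun i t => ?_
      rw [AP3_succ_mulVec]
      have h1 : ∀ j : Fin 3, kerVec (k+1) (Fin.cons j t) = zv j * kerVec k t :=
        fun j => kerVec_cons k j t
      have h2 : (fun s => kerVec (k+1) (Fin.cons i s)) = fun s => zv i * kerVec k s := by
        funext s; exact kerVec_cons k i s
      simp only [h1, h2]
      have h3 : (AP3 k).mulVec (fun s => zv i * kerVec k s) = fun s => 0 := by
        have : (fun s => zv i * kerVec k s) = zv i • kerVec k := rfl
        rw [this, Matrix.mulVec_smul, ih]
        funext s; simp
      rw [h3]
      have : ∑ j : Fin 3, matA1 i j * (zv j * kerVec k t)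
          = (∑ j : Fin 3, matA1 i j * zv j) * kerVec k t := by
        rw [Finset.sum_mul]; exact Finset.sum_congr rfl fun j _ => by ring
      rw [this, A1_row_z]
      simp

lemma AP3_mulVec_sqVec (k : ℕ) : (AP3 k).mulVec (sqVec k) = Real.sqrt 2 • sqVec k := by
  cases k with
  | zero =>
      funext x
      rw [AP3_zero_mulVec]
      have : ∀ j : Fin 3, sqVec 0 (fun _ => j) = uv j := by
        intro j; simp [sqVec]
      simp only [this]
      rw [A1_row_u]
      simp [sqVec]
  | succ k =>
      refine slices_eq fun i t => ?_
      rw [AP3_succ_mulVec]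
      have h1 : ∀ j : Fin 3, sqVec (k+1) (Fin.cons j t) = uv j * kerVec k t :=
        fun j => sqVec_cons k j t
      have h2 : (fun s => sqVec (k+1) (Fin.cons i s)) = fun s => uv i * kerVec k s := by
        funext s; exact sqVec_cons k i s
      simp only [h1, h2]
      have h3 : (AP3 k).mulVec (fun s => uv i * kerVec k s) = fun s => 0 := by
        have : (fun s => uv i * kerVec k s) = uv i • kerVec k := rfl
        rw [this, Matrix.mulVec_smul, AP3_mulVec_kerVec]
        funext s; simp
      rw [h3]
      have : ∑ j : Fin 3, matA1 i j * (uv j * kerVec k t)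
          = (∑ j : Fin 3, matA1 i j * uv j) * kerVec k t := by
        rw [Finset.sum_mul]; exact Finset.sum_congr rfl fun j _ => by ring
      rw [this, A1_row_u]
      have := sqVec_cons k i t
      simp only [Pi.smul_apply, this, smul_eq_mul]
      ring

lemma sgn_flip (k : ℕ) (v : (Fin (k + 1) → Fin 3) → ℝ) :
    (AP3 k).mulVec (fun y => sgnV k y * v y) = fun y => -(sgnV k y) * (AP3 k).mulVec v y := by
  induction k with
  | zero =>
      funext x
      rw [AP3_zero_mulVec]
      have hs : ∀ j : Fin 3, sgnV 0 (fun _ => j) = dvv j := by intro j; simp [sgnV]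
      simp only [hs]
      rw [AP3_zero_mulVec]
      have hx : sgnV 0 x = dvv (x 0) := by
        have : x = fun _ => x 0 := by funext i; congr 1; omega
        rw [this]; simp [sgnV]
      rw [hx]
      exact A1_row_d (x 0) (fun j => v (fun _ => j))
  | succ k ih =>
      refine slices_eq fun i t => ?_
      rw [AP3_succ_mulVec, AP3_succ_mulVec]
      have hw : ∀ j : Fin 3, sgnV (k+1) (Fin.cons j t) * v (Fin.cons j t)
          = dvv j * (sgnV k t * v (Fin.cons j t)) := by
        intro j; rw [sgnV_cons]; ring
      simp only [hw]
      have hslice : (fun s => sgnV (k+1) (Fin.cons i s) * v (Fin.cons i s))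
          = dvv i • (fun s => sgnV k s * v (Fin.cons i s)) := by
        funext s; rw [sgnV_cons]; simp [smul_eq_mul]; ring
      rw [hslice, Matrix.mulVec_smul, ih]
      have hd2 : dvv i * dvv i = 1 := by fin_cases i <;> norm_num [dvv]
      have hsum : ∑ j : Fin 3, matA1 i j * (dvv j * (sgnV k t * v (Fin.cons j t)))
          = sgnV k t * ∑ j : Fin 3, matA1 i j * (dvv j * v (Fin.cons j t)) := by
        rw [Finset.mul_sum]; exact Finset.sum_congr rfl fun j _ => by ring
      rw [hsum, A1_row_d, sgnV_cons]
      simp only [Pi.smul_apply, smul_eq_mul, matD3_diag]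
      nlinarith [hd2]

lemma eq_const_fun1 (y : Fin 1 → Fin 3) : y = fun _ => y 0 := by
  funext i; congr 1; omega

lemma fin3_cases (j : Fin 3) : j = 0 ∨ j = 1 ∨ j = 2 := by omega

lemma base_eqs {x : (Fin 1 → Fin 3) → ℝ} {lam : ℝ}
    (hx : (AP3 0).mulVec x = lam • x) :
    x (fun _ => 1) = lam * x (fun _ => 0) ∧
    x (fun _ => 0) - x (fun _ => 2) = lam * x (fun _ => 1) ∧
    -x (fun _ => 1) = lam * x (fun _ => 2) := by
  have h0 := congrFun hx (fun _ => (0 : Fin 3))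
  have h1 := congrFun hx (fun _ => (1 : Fin 3))
  have h2 := congrFun hx (fun _ => (2 : Fin 3))
  rw [AP3_zero_mulVec] at h0 h1 h2
  simp only [Pi.smul_apply, smul_eq_mul] at h0 h1 h2
  norm_num [matA1, Fin.sum_univ_three, Matrix.cons_val_two, Matrix.tail_cons, Matrix.head_cons] at h0 h1 h2
  refine ⟨by linarith, by linarith, by linarith⟩

lemma eig_bound (k : ℕ) : ∀ (lam : ℝ) (x : (Fin (k + 1) → Fin 3) → ℝ),
    x ≠ 0 → (AP3 k).mulVec x = lam • x → lam = 0 ∨ 2 ≤ lam ^ 2 := by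
  induction k with
  | zero =>
      intro lam x hx0 hx
      obtain ⟨h0, h1, h2⟩ := base_eqs hx
      by_cases hb : x (fun _ => 1) = 0
      · by_cases hl : lam = 0
        · exact Or.inl hl
        · exfalso
          apply hx0
          have ha : x (fun _ => 0) = 0 := by
            rw [hb] at h0
            exact (mul_eq_zero.mp h0.symm).resolve_left hl
          have hc : x (fun _ => 2) = 0 := by
            rw [hb] at h2
            have : lam * x (fun _ => 2) = 0 := by linarith
            exact (mul_eq_zero.mp this).resolve_left hl
          funext y
          rw [eq_const_fun1 y]
          rcases fin3_cases (y 0) with h | h | h <;> rw [h]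
          · exact ha
          · exact hb
          · exact hc
      · right
        have : lam ^ 2 * x (fun _ => 1) = 2 * x (fun _ => 1) := by
          have hmul : lam * (x (fun _ => 0) - x (fun _ => 2)) = lam * (lam * x (fun _ => 1)) := by
            rw [h1]
          nlinarith [hmul, h0, h2]
        have h22 : lam ^ 2 = 2 := by
          rw [mul_eq_mul_right_iff] at this
          rcases this with h | h
          · exact h
          · exact absurd h hb
        linarith
  | succ k ih =>
      intro lam x hx0 hx
      set x0 : (Fin (k + 1) → Fin 3) → ℝ := fun s => x (Fin.cons 0 s) with hx0def
      set x1 : (Fin (k + 1) → Fin 3) → ℝ := fun s => x (Fin.cons 1 s) with hx1def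
      set x2 : (Fin (k + 1) → Fin 3) → ℝ := fun s => x (Fin.cons 2 s) with hx2def
      have e0 : ∀ t, x1 t + (AP3 k).mulVec x0 t = lam * x0 t := by
        intro t
        have := congrFun hx (Fin.cons 0 t)
        rw [mulVec_succ_zero] at this
        simpa using this
      have e1 : ∀ t, x0 t - x2 t - (AP3 k).mulVec x1 t = lam * x1 t := by
        intro t
        have := congrFun hx (Fin.cons 1 t)
        rw [mulVec_succ_one] at this
        simpa using this
      have e2 : ∀ t, -x1 t + (AP3 k).mulVec x2 t = lam * x2 t := by
        intro t
        have := congrFun hx (Fin.cons 2 t)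
        rw [mulVec_succ_two] at this
        simpa using this
      by_cases hs : x0 + x2 = 0
      · -- s = 0 case
        have hx2mx0 : ∀ t, x2 t = -x0 t := by
          intro t; have := congrFun hs t; simp at this; linarith
        have hx1ne : x1 ≠ 0 := by
          intro h1z
          apply hx0
          have hAx1 : (AP3 k).mulVec x1 = 0 := by rw [h1z, Matrix.mulVec_zero]
          have hx0z : ∀ t, x0 t = 0 := by
            intro t
            have h := e1 t
            rw [h1z] at h
            simp at h
            linarith [hx2mx0 t, h]
          refine slices_eq (y := 0) fun i t => ?_
          rcases fin3_cases i with h | h | h <;> rw [h]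
          · simpa using hx0z t
          · simpa using congrFun h1z t
          · have := hx2mx0 t
            have := hx0z t
            show x2 t = _
            simp; linarith [hx2mx0 t, hx0z t]
      -- A x1 = 2 x0 - lam x1
        have hAx1 : (AP3 k).mulVec x1 = fun t => 2 * x0 t - lam * x1 t := by
          funext t
          have := e1 t
          have h2 := hx2mx0 t
          linarith
        have hAx0 : (AP3 k).mulVec x0 = fun t => lam * x0 t - x1 t := by
          funext t; have := e0 t; linarith
        have key : (AP3 k).mulVec ((AP3 k).mulVec x1) = (lam ^ 2 - 2) • x1 := by
          rw [hAx1]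
          have : (fun t => 2 * x0 t - lam * x1 t) = (2 : ℝ) • x0 - lam • x1 := by
            funext t; simp
          rw [this, Matrix.mulVec_sub, Matrix.mulVec_smul, Matrix.mulVec_smul, hAx0, hAx1]
          funext t
          simp only [Pi.sub_apply, Pi.smul_apply, smul_eq_mul]
          ring
        have := sq_eig_nonneg k hx1ne key
        right; linarith
      · -- s ≠ 0 : it is an eigenvector of AP3 k
        have hAs : (AP3 k).mulVec (x0 + x2) = lam • (x0 + x2) := by
          funext t
          rw [Matrix.mulVec_add]
          simp only [Pi.add_apply, Pi.smul_apply, smul_eq_mul]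
          have := e0 t; have := e2 t
          linarith
        exact ih lam (x0 + x2) hs hAs

lemma ker_char (k : ℕ) : ∀ x : (Fin (k + 1) → Fin 3) → ℝ,
    (AP3 k).mulVec x = 0 → ∃ c : ℝ, x = c • kerVec k := by
  induction k with
  | zero =>
      intro x hx
      have hx' : (AP3 0).mulVec x = (0 : ℝ) • x := by rw [hx, zero_smul]
      obtain ⟨h0, h1, h2⟩ := base_eqs hx'
      simp only [zero_mul] at h0 h1 h2
      refine ⟨x (fun _ => 0), ?_⟩
      funext y
      rw [eq_const_fun1 y]
      have hker : ∀ j : Fin 3, kerVec 0 (fun _ => j) = zv j := by intro j; simp [kerVec]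
      rcases fin3_cases (y 0) with h | h | h <;> rw [h] <;>
        simp only [Pi.smul_apply, smul_eq_mul, hker]
      · simp [zv]
      · simp [zv, h0]
      · simp [zv]; linarith
  | succ k ih =>
      intro x hx
      set x0 : (Fin (k + 1) → Fin 3) → ℝ := fun s => x (Fin.cons 0 s) with hx0def
      set x1 : (Fin (k + 1) → Fin 3) → ℝ := fun s => x (Fin.cons 1 s) with hx1def
      set x2 : (Fin (k + 1) → Fin 3) → ℝ := fun s => x (Fin.cons 2 s) with hx2def
      have e0 : ∀ t, x1 t + (AP3 k).mulVec x0 t = 0 := by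
        intro t
        have := congrFun hx (Fin.cons 0 t)
        rw [mulVec_succ_zero] at this
        simpa using this
      have e1 : ∀ t, x0 t - x2 t - (AP3 k).mulVec x1 t = 0 := by
        intro t
        have := congrFun hx (Fin.cons 1 t)
        rw [mulVec_succ_one] at this
        simpa using this
      have e2 : ∀ t, -x1 t + (AP3 k).mulVec x2 t = 0 := by
        intro t
        have := congrFun hx (Fin.cons 2 t)
        rw [mulVec_succ_two] at this
        simpa using this
      have hAx1 : (AP3 k).mulVec x1 = fun t => x0 t - x2 t := by
        funext t; have := e1 t; linarith
      have key : (AP3 k).mulVec ((AP3 k).mulVec x1) = (-2 : ℝ) • x1 := by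
        rw [hAx1]
        have : (fun t => x0 t - x2 t) = x0 - x2 := rfl
        rw [this, Matrix.mulVec_sub]
        funext t
        simp only [Pi.sub_apply, Pi.smul_apply, smul_eq_mul]
        have := e0 t; have := e2 t
        linarith
      have hx1z : x1 = 0 := by
        by_contra h1ne
        have := sq_eig_nonneg k h1ne key
        linarith
      have hx02 : x0 = x2 := by
        funext t
        have := e1 t
        rw [hx1z] at this
        simp at this
        linarith
      have hAx0 : (AP3 k).mulVec x0 = 0 := by
        funext t
        have := e0 t
        rw [hx1z] at this
        simpa using this
      obtain ⟨c, hc⟩ := ih x0 hAx0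
      refine ⟨c, ?_⟩
      refine slices_eq fun i t => ?_
      have hkc : ∀ j : Fin 3, kerVec (k + 1) (Fin.cons j t) = zv j * kerVec k t :=
        fun j => kerVec_cons k j t
      rcases fin3_cases i with h | h | h <;> rw [h] <;>
        simp only [Pi.smul_apply, smul_eq_mul, hkc]
      · show x0 t = _
        rw [hc]; simp [zv]
      · show x1 t = _
        rw [hx1z]; simp [zv]
      · show x2 t = _
        rw [← hx02, hc]; simp [zv]

lemma charpoly_AP3 (k : ℕ) :
    (AP3 k).charpoly = LinearMap.charpoly ((AP3 k).mulVecLin) := by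
  rw [← Matrix.toLin'_apply']
  conv_lhs => rw [← LinearMap.toMatrix'_toLin' (AP3 k)]
  rw [← LinearMap.toMatrix_eq_toMatrix']
  exact LinearMap.charpoly_toMatrix _ _

lemma pow_ker (k n : ℕ) : ∀ m : (Fin (k + 1) → Fin 3) → ℝ,
    (((AP3 k).mulVecLin) ^ n) m = 0 → (AP3 k).mulVec m = 0 := by
  induction n with
  | zero =>
      intro m hm
      simp only [pow_zero, Module.End.one_apply] at hm
      rw [hm, Matrix.mulVec_zero]
  | succ n ihn =>
      intro m hm
      rw [pow_succ, Module.End.mul_apply] at hm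
      have := ihn _ hm
      rw [Matrix.mulVecLin_apply] at this
      exact mulVec_mulVec_eq_zero k this

lemma maxGen_eq (k : ℕ) :
    Module.End.maxGenEigenspace ((AP3 k).mulVecLin) 0 = Submodule.span ℝ {kerVec k} := by
  ext m
  rw [Module.End.mem_maxGenEigenspace, Submodule.mem_span_singleton]
  constructor
  · rintro ⟨n, hn⟩
    simp only [zero_smul, sub_zero] at hn
    have := pow_ker k n m hn
    obtain ⟨c, hc⟩ := ker_char k m this
    exact ⟨c, hc.symm⟩
  · rintro ⟨c, hc⟩
    refine ⟨1, ?_⟩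
    simp only [zero_smul, sub_zero, pow_one, Matrix.mulVecLin_apply]
    rw [← hc, Matrix.mulVec_smul, AP3_mulVec_kerVec, smul_zero]

lemma rootMult_AP3 (k : ℕ) :
    Polynomial.rootMultiplicity (0 : ℝ) (AP3 k).charpoly = 1 := by
  rw [Polynomial.rootMultiplicity_eq_natTrailingDegree', charpoly_AP3,
    ← LinearMap.finrank_maxGenEigenspace_zero_eq, maxGen_eq]
  exact finrank_span_singleton (kerVec_ne_zero k)


/-- For every `k ≥ 1` (here `AP3 k` is the paper's `A_{k+1}`, `k : ℕ`):
(i) `0` is an eigenvalue of `A_k` and has multiplicity `1` as a root of the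
characteristic polynomial; (ii) if `λ` is an eigenvalue then so is `−λ`;
(iii) every positive eigenvalue is at least `√2`, and `√2` is an eigenvalue. -/
theorem AP3_eigenvalues (k : ℕ) :
    (HasEig (AP3 k) 0 ∧ Polynomial.rootMultiplicity (0 : ℝ) (AP3 k).charpoly = 1) ∧
    (∀ lam : ℝ, HasEig (AP3 k) lam → HasEig (AP3 k) (-lam)) ∧
    ((∀ lam : ℝ, HasEig (AP3 k) lam → 0 < lam → Real.sqrt 2 ≤ lam) ∧
      HasEig (AP3 k) (Real.sqrt 2)) := by
  refine ⟨⟨⟨kerVec k, kerVec_ne_zero k, by rw [AP3_mulVec_kerVec, zero_smul]⟩,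
    rootMult_AP3 k⟩, ?_, ?_, ⟨sqVec k, sqVec_ne_zero k, AP3_mulVec_sqVec k⟩⟩
  · rintro lam ⟨x, hx0, hx⟩
    refine ⟨fun y => sgnV k y * x y, ?_, ?_⟩
    · obtain ⟨y, hy⟩ := Function.ne_iff.mp hx0
      refine Function.ne_iff.mpr ⟨y, ?_⟩
      simp only [Pi.zero_apply] at hy ⊢
      exact mul_ne_zero (sgnV_ne_zero k y) hy
    · rw [sgn_flip]
      funext y
      have := congrFun hx y
      simp only [Pi.smul_apply, smul_eq_mul] at this ⊢
      rw [this]; ring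
  · rintro lam ⟨x, hx0, hx⟩ hpos
    rcases eig_bound k lam x hx0 hx with h | h
    · exact absurd h (ne_of_gt hpos)
    · have h1 : Real.sqrt 2 ≤ Real.sqrt (lam ^ 2) := Real.sqrt_le_sqrt h
      rwa [Real.sqrt_sq hpos.le] at h1
end

section
/- Let A_1 = [[0,1,0],[1,0,−1],[0,−1,0]] and for k ≥ 1 let A_{k+1} = A_1 ⊗ I_{3^k} + diag(1,−1,1) ⊗ A_k. Then for every k ≥ 1 the characteristic polynomial satisfies det(xI − A_{k+1}) = det(xI − A_k) · det((x² − 2)I − A_k²). -/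
open Kronecker Matrix

section TriMAux

variable {N : Type*} [Fintype N] [DecidableEq N]

section aux
variable {m m₁ m₂ n n₁ n₂ : Type*}

lemma myFC_add (A₁ B₁ : Matrix m n₁ ℝ) (A₂ B₂ : Matrix m n₂ ℝ) :
    fromCols A₁ A₂ + fromCols B₁ B₂ = fromCols (A₁ + B₁) (A₂ + B₂) := by
  ext _ (_ | _) <;> simp [Matrix.fromCols_apply_inl, Matrix.fromCols_apply_inr]

lemma myFR_add (A₁ B₁ : Matrix m₁ n ℝ) (A₂ B₂ : Matrix m₂ n ℝ) :
    fromRows A₁ A₂ + fromRows B₁ B₂ = fromRows (A₁ + B₁) (A₂ + B₂) := by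
  ext (_ | _) _ <;> simp [Matrix.fromRows_apply_inl, Matrix.fromRows_apply_inr]

lemma myFC0R (B₁ : Matrix m₁ n₂ ℝ) (B₂ : Matrix m₂ n₂ ℝ) :
    fromCols (0 : Matrix (m₁ ⊕ m₂) n₁ ℝ) (fromRows B₁ B₂) = fromBlocks 0 B₁ 0 B₂ := by
  rw [← Matrix.fromCols_fromRows_eq_fromBlocks, Matrix.fromRows_zero]

lemma myFCR0 (A₁ : Matrix m₁ n₁ ℝ) (A₂ : Matrix m₂ n₁ ℝ) :
    fromCols (fromRows A₁ A₂) (0 : Matrix (m₁ ⊕ m₂) n₂ ℝ) = fromBlocks A₁ 0 A₂ 0 := by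
  rw [← Matrix.fromCols_fromRows_eq_fromBlocks, Matrix.fromRows_zero]

lemma myFR0C (B₁ : Matrix m₂ n₁ ℝ) (B₂ : Matrix m₂ n₂ ℝ) :
    fromRows (0 : Matrix m₁ (n₁ ⊕ n₂) ℝ) (fromCols B₁ B₂) = fromBlocks 0 0 B₁ B₂ := by
  rw [← Matrix.fromRows_fromCols_eq_fromBlocks, Matrix.fromCols_zero]

lemma myFRC0 (A₁ : Matrix m₁ n₁ ℝ) (A₂ : Matrix m₁ n₂ ℝ) :
    fromRows (fromCols A₁ A₂) (0 : Matrix m₂ (n₁ ⊕ n₂) ℝ) = fromBlocks A₁ A₂ 0 0 := by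
  rw [← Matrix.fromRows_fromCols_eq_fromBlocks, Matrix.fromCols_zero]

lemma myFB_add_one {n₁ n₂ : Type*} [DecidableEq n₁] [DecidableEq n₂]
    (A : Matrix n₁ n₁ ℝ) (B : Matrix n₁ n₂ ℝ) (C : Matrix n₂ n₁ ℝ) (D : Matrix n₂ n₂ ℝ) :
    fromBlocks A B C D + 1 = fromBlocks (A + 1) B C (D + 1) := by
  rw [← Matrix.fromBlocks_one, Matrix.fromBlocks_add, add_zero, add_zero]

end aux

/-- The 3×3 block matrix [[P,-1,0],[-1,Q,1],[0,1,P]]. -/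
def triM (P Q : Matrix N N ℝ) : Matrix (N ⊕ (N ⊕ N)) (N ⊕ (N ⊕ N)) ℝ :=
  fromBlocks P (fromCols (-1) 0) (fromRows (-1) 0) (fromBlocks Q 1 1 P)

theorem triM_det (P Q : Matrix N N ℝ) :
    (triM P Q).det = (Q * P - 2).det * P.det := by
  set E1 : Matrix (N ⊕ (N ⊕ N)) (N ⊕ (N ⊕ N)) ℝ :=
    fromBlocks 1 (fromCols 0 0) (fromRows P 0) (fromBlocks 1 0 0 1) with hE1
  set E2 : Matrix (N ⊕ (N ⊕ N)) (N ⊕ (N ⊕ N)) ℝ :=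
    fromBlocks 1 (fromCols 0 0) (fromRows Q 1) (fromBlocks 1 0 0 1) with hE2
  set U : Matrix (N ⊕ (N ⊕ N)) (N ⊕ (N ⊕ N)) ℝ :=
    fromBlocks 1 (fromCols (-1) 0) (fromRows 0 0) (fromBlocks 1 0 0 1) with hU
  set L : Matrix (N ⊕ (N ⊕ N)) (N ⊕ (N ⊕ N)) ℝ :=
    fromBlocks 1 (fromCols 0 0) (fromRows 1 0) (fromBlocks 1 0 0 1) with hL
  set E3 : Matrix (N ⊕ (N ⊕ N)) (N ⊕ (N ⊕ N)) ℝ :=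
    fromBlocks 1 (fromCols 0 0) (fromRows 0 0) (fromBlocks 1 0 1 1) with hE3
  have hprod : E2 * triM P Q * E1 * (U * L * U) * E3 =
      fromBlocks (-1) (fromCols 0 0) (fromRows 0 0) (fromBlocks (2 - Q * P) 1 0 P) := by
    simp [hE1, hE2, hU, hL, hE3, triM, Matrix.fromBlocks_multiply,
      Matrix.fromRows_mul, Matrix.mul_fromCols, Matrix.fromCols_mul_fromRows,
      Matrix.fromRows_mul_fromCols, Matrix.fromCols_mul_fromBlocks,
      Matrix.fromBlocks_mul_fromRows, Matrix.fromBlocks_add, myFC_add, myFR_add,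
      myFC0R, myFCR0, myFR0C, myFRC0, Matrix.fromCols_fromRows_eq_fromBlocks,
      Matrix.fromRows_fromCols_eq_fromBlocks, myFB_add_one]
    rw [sub_eq_add_neg, ← one_add_one_eq_two]
    abel
  have hdets : E1.det = 1 ∧ E2.det = 1 ∧ U.det = 1 ∧ L.det = 1 ∧ E3.det = 1 := by
    refine ⟨?_, ?_, ?_, ?_, ?_⟩ <;>
      simp [hE1, hE2, hU, hL, hE3, Matrix.fromCols_zero, Matrix.fromRows_zero,
        Matrix.det_fromBlocks_zero₁₂, Matrix.det_fromBlocks_zero₂₁]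
  obtain ⟨h1, h2, hu, hl, h3⟩ := hdets
  have hd : (triM P Q).det = (fromBlocks (-1 : Matrix N N ℝ) (fromCols 0 0)
      (fromRows 0 0) (fromBlocks (2 - Q * P) 1 0 P)).det := by
    have := congrArg Matrix.det hprod
    simpa [Matrix.det_mul, h1, h2, hu, hl, h3] using this
  rw [hd]
  rw [Matrix.fromCols_zero, Matrix.fromRows_zero, Matrix.det_fromBlocks_zero₂₁,
    Matrix.det_fromBlocks_zero₂₁]
  rw [show ((2 : Matrix N N ℝ) - Q * P) = -(Q * P - 2) by rw [neg_sub]]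
  have hpow : ((-1 : ℝ) ^ Fintype.card N) * ((-1 : ℝ) ^ Fintype.card N) = 1 := by
    rw [← pow_add]; exact Even.neg_one_pow ⟨_, rfl⟩
  rw [Matrix.det_neg, Matrix.det_one, mul_one, Matrix.det_neg, ← mul_assoc, ← mul_assoc,
    hpow, one_mul]

/-- The identification of `N ⊕ (N ⊕ N)` with `Fin 3 × N`. -/
def sumToProd (N : Type*) : (N ⊕ (N ⊕ N)) ≃ Fin 3 × N where
  toFun := Sum.elim (fun a => (0, a)) (Sum.elim (fun a => (1, a)) (fun a => (2, a)))
  invFun := fun p => if p.1 = 0 then .inl p.2 else if p.1 = 1 then .inr (.inl p.2)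
    else .inr (.inr p.2)
  left_inv := by rintro (a | a | a) <;> simp
  right_inv := by rintro ⟨i, a⟩; fin_cases i <;> simp

lemma sub_kron_eq_triM (x : ℝ) (B : Matrix N N ℝ) :
    x • (1 : Matrix (Fin 3 × N) (Fin 3 × N) ℝ) - (matA1 ⊗ₖ 1 + matD3 ⊗ₖ B)
      = reindex (sumToProd N) (sumToProd N) (triM (x • 1 - B) (x • 1 + B)) := by
  ext ⟨i, a⟩ ⟨j, b⟩
  fin_cases i <;> fin_cases j <;>
    simp [triM, matA1, matD3, sumToProd, Matrix.one_apply, fromBlocks, Matrix.fromRows_apply_inl, Matrix.fromRows_apply_inr,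
      fromCols, Prod.ext_iff, mul_ite, ite_mul, Matrix.vecHead, Matrix.vecTail] <;>
    (try (split <;> norm_num))

lemma QP_eq (x : ℝ) (B : Matrix N N ℝ) :
    (x • (1 : Matrix N N ℝ) + B) * (x • 1 - B) - 2 = (x ^ 2 - 2) • 1 - B ^ 2 := by
  have h2 : ((2 : ℝ)) • (1 : Matrix N N ℝ) = 2 := by
    rw [two_smul, one_add_one_eq_two]
  rw [sub_smul, h2, pow_two, pow_two]
  simp only [add_mul, mul_sub, smul_mul_assoc, mul_smul_comm, one_mul, mul_one, smul_smul,
    smul_add, smul_sub]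
  abel

end TriMAux

/-- For every `k ≥ 1` the characteristic polynomial satisfies
`det(xI − A_{k+1}) = det(xI − A_k) · det((x² − 2)I − A_k²)`
(with `AP3 k` the paper's `A_{k+1}`, this is stated for all `k : ℕ` and all real `x`). -/
theorem AP3_charpoly_rec (k : ℕ) (x : ℝ) :
    (x • (1 : Matrix (Fin (k + 2) → Fin 3) (Fin (k + 2) → Fin 3) ℝ) - AP3 (k + 1)).det
      = (x • (1 : Matrix (Fin (k + 1) → Fin 3) (Fin (k + 1) → Fin 3) ℝ) - AP3 k).det
        * (((x ^ 2 - 2) • (1 : Matrix (Fin (k + 1) → Fin 3) (Fin (k + 1) → Fin 3) ℝ)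
            - (AP3 k) ^ 2).det) := by
  set N := (Fin (k + 1) → Fin 3)
  set B := AP3 k with hB
  set e := Fin.consEquiv fun _ : Fin (k + 2) => Fin 3
  have hstep : AP3 (k + 1) = Matrix.reindex e e (matA1 ⊗ₖ (1 : Matrix N N ℝ) + matD3 ⊗ₖ B) := by
    rw [AP3]
  rw [hstep]
  have h1 : x • (1 : Matrix (Fin (k + 2) → Fin 3) (Fin (k + 2) → Fin 3) ℝ)
      - Matrix.reindex e e (matA1 ⊗ₖ (1 : Matrix N N ℝ) + matD3 ⊗ₖ B)
      = Matrix.reindex e e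
        (x • (1 : Matrix (Fin 3 × N) (Fin 3 × N) ℝ) - (matA1 ⊗ₖ 1 + matD3 ⊗ₖ B)) := by
    simp only [Matrix.reindex_apply, Matrix.submatrix_sub, Matrix.submatrix_smul,
      Pi.sub_apply, Pi.smul_apply, Matrix.submatrix_one_equiv]
  rw [h1, Matrix.det_reindex_self, sub_kron_eq_triM, Matrix.det_reindex_self, triM_det,
    QP_eq, mul_comm]
end

section
/- Fix n ≥ 1. Let A_1 be the 2n×2n real matrix with entries (A_1)_{2k−1,2k} = (A_1)_{2k,2k−1} = 1 for 1 ≤ k ≤ n, (A_1)_{2k,2k+1} = (A_1)_{2k+1,2k} = −1 for 1 ≤ k ≤ n−1, and 0 elsewhere. Then the characteristic polynomial of A_1² equals g_n(x)², i.e. det(xI_{2n} − A_1²) = g_n(x)². -/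
open Kronecker Matrix

/-- The signed adjacency matrix `A_1` of the path `P_{2n}`: in 1-indexed terms,
`(A_1)_{2k−1,2k} = (A_1)_{2k,2k−1} = 1` for `1 ≤ k ≤ n` and
`(A_1)_{2k,2k+1} = (A_1)_{2k+1,2k} = −1` for `1 ≤ k ≤ n−1`, zero elsewhere.
On the 0-indexed `Fin (2n)`, the entry at `(i, i+1)` is `1` when `i` is even and
`−1` when `i` is odd. -/
def signedPath (n : ℕ) : Matrix (Fin (2 * n)) (Fin (2 * n)) ℝ :=
  Matrix.of fun i j =>
    if (i : ℕ) + 1 = (j : ℕ) then (if (i : ℕ) % 2 = 0 then 1 else -1)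
    else if (j : ℕ) + 1 = (i : ℕ) then (if (j : ℕ) % 2 = 0 then 1 else -1)
    else 0

/-- `D = diag(1, −1, 1, …, −1)` of size `2n`. -/
def altDiag (n : ℕ) : Matrix (Fin (2 * n)) (Fin (2 * n)) ℝ :=
  Matrix.diagonal fun i => if (i : ℕ) % 2 = 0 then 1 else -1

/-- The signed adjacency matrices of `P_{2n}^k`: `APn n 0 = A_1` and
`APn n (k+1) = A_1 ⊗ I_{(2n)^(k+1)} + D ⊗ APn n k` (Kronecker products), so
`APn n k` is the matrix `A_{k+1}` of the paper; it is indexed by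
`Fin (k+1) → Fin (2n)`, a type of cardinality `(2n)^(k+1)`. -/
noncomputable def APn (n : ℕ) :
    (k : ℕ) → Matrix (Fin (k + 1) → Fin (2 * n)) (Fin (k + 1) → Fin (2 * n)) ℝ
  | 0 => Matrix.reindex (Equiv.funUnique (Fin 1) (Fin (2 * n))).symm
      (Equiv.funUnique (Fin 1) (Fin (2 * n))).symm (signedPath n)
  | (k + 1) =>
      Matrix.reindex (Fin.consEquiv fun _ : Fin (k + 2) => Fin (2 * n))
        (Fin.consEquiv fun _ : Fin (k + 2) => Fin (2 * n))
        (signedPath n ⊗ₖ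
            (1 : Matrix (Fin (k + 1) → Fin (2 * n)) (Fin (k + 1) → Fin (2 * n)) ℝ)
          + altDiag n ⊗ₖ APn n k)

section Aux

/-- tridiagonal, diag `x-2` except `x-1` at the last index, `1` on off-diagonals -/
private def triT (x : ℝ) (m : ℕ) : Matrix (Fin m) (Fin m) ℝ :=
  Matrix.of fun i j =>
    if (i : ℕ) = j then (if (i : ℕ) + 1 = m then x - 1 else x - 2)
    else if (i : ℕ) + 1 = j ∨ (j : ℕ) + 1 = i then 1 else 0

private lemma triT_det (x : ℝ) : (m : ℕ) → (triT x m).det = gPoly m x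
  | 0 => by simp [Matrix.det_isEmpty, gPoly]
  | 1 => by
      rw [show (1 : ℕ) = 0 + 1 from rfl] at *
      rw [Matrix.det_fin_one]
      simp [triT, gPoly]
  | (k + 2) => by
      have ih1 := triT_det x (k + 1)
      have ih0 := triT_det x k
      rw [Matrix.det_succ_row_zero, Fin.sum_univ_succ, Fin.sum_univ_succ]
      have h00 : triT x (k + 2) 0 0 = x - 2 := by simp [triT]
      have h01 : triT x (k + 2) 0 (Fin.succ 0) = 1 := by simp [triT]
      have hrest : ∀ j : Fin k,
          triT x (k + 2) 0 (Fin.succ (Fin.succ j)) = 0 := by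
        intro j; simp [triT]
      have hm0 : (triT x (k + 2)).submatrix Fin.succ (Fin.succAbove 0) = triT x (k + 1) := by
        ext i j
        simp only [Fin.succAbove_zero, Matrix.submatrix_apply, triT, Matrix.of_apply,
          Fin.val_succ]
        split_ifs <;> first | rfl | omega
      have ha0 : (Fin.succAbove (1 : Fin (k + 2)) 0) = 0 := by
        simp [Fin.succAbove, Fin.lt_def]
      have ha : ∀ j : Fin k,
          ((Fin.succAbove (1 : Fin (k + 2)) (Fin.succ j)) : ℕ) = (j : ℕ) + 2 := by
        intro j
        simp [Fin.succAbove, Fin.lt_def]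
      have hm1 : ((triT x (k + 2)).submatrix Fin.succ (Fin.succAbove 1)).det = gPoly k x := by
        rw [Matrix.det_succ_column_zero, Fin.sum_univ_succ]
        have hB0 : (triT x (k + 2)).submatrix Fin.succ (Fin.succAbove 1) 0 0 = 1 := by
          simp only [Matrix.submatrix_apply, ha0]
          simp [triT]
        have hBrest : ∀ i : Fin k,
            (triT x (k + 2)).submatrix Fin.succ (Fin.succAbove 1) (Fin.succ i) 0 = 0 := by
          intro i
          simp only [Matrix.submatrix_apply, ha0]
          simp [triT]
        have hmm : (((triT x (k + 2)).submatrix Fin.succ (Fin.succAbove 1)).submatrix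
            (Fin.succAbove 0) Fin.succ) = triT x k := by
          ext i j
          simp only [Fin.succAbove_zero, Matrix.submatrix_apply, Matrix.of_apply, triT,
            Fin.val_succ, ha j]
          split_ifs <;> first | rfl | omega
        rw [Finset.sum_eq_zero (fun i _ => by rw [hBrest i]; ring)]
        rw [hB0, hmm, ih0]
        simp
      rw [Finset.sum_eq_zero (fun j _ => by rw [hrest j]; ring)]
      rw [Fin.succ_zero_eq_one] at *
      rw [h00, h01, hm0, hm1, ih1]
      simp [gPoly]
      ring

private def evenOdd (n : ℕ) : (Fin n ⊕ Fin n) ≃ Fin (2 * n) where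
  toFun := fun s => Sum.elim (fun k : Fin n => (⟨2 * (k : ℕ), by have := k.isLt; omega⟩ : Fin (2 * n)))
    (fun k : Fin n => (⟨2 * (k : ℕ) + 1, by have := k.isLt; omega⟩ : Fin (2 * n))) s
  invFun := fun i => if (i : ℕ) % 2 = 0 then Sum.inl ⟨(i : ℕ) / 2, by have := i.isLt; omega⟩
    else Sum.inr ⟨(i : ℕ) / 2, by have := i.isLt; omega⟩
  left_inv := by
    rintro (k | k)
    · simp only [Sum.elim_inl]
      simp only [show 2 * (k : ℕ) % 2 = 0 by omega, ↓reduceIte]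
      exact congrArg _ (Fin.ext (by simp only [Fin.val_mk]; omega))
    · simp only [Sum.elim_inr]
      simp only [show ¬ ((2 * (k : ℕ) + 1) % 2 = 0) by omega, ↓reduceIte]
      exact congrArg _ (Fin.ext (by simp only [Fin.val_mk]; omega))
  right_inv := by
    intro i
    by_cases h : (i : ℕ) % 2 = 0 <;> simp [h] <;> exact Fin.ext (by simp only [Fin.val_mk]; omega)

private def Cmat (n : ℕ) : Matrix (Fin n) (Fin n) ℝ :=
  Matrix.of fun k l => if (k : ℕ) = l then 1 else if (l : ℕ) + 1 = k then -1 else 0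

private lemma signedPath_submatrix (n : ℕ) :
    (signedPath n).submatrix (evenOdd n) (evenOdd n) =
      fromBlocks 0 (Cmat n) (Cmat n)ᵀ 0 := by
  ext (k | k) (l | l) <;>
    simp only [Matrix.submatrix_apply, evenOdd, Equiv.coe_fn_mk, Sum.elim_inl, Sum.elim_inr,
      signedPath, Cmat, Matrix.of_apply, Matrix.fromBlocks_apply₁₁, Matrix.fromBlocks_apply₁₂,
      Matrix.fromBlocks_apply₂₁, Matrix.fromBlocks_apply₂₂, Matrix.transpose_apply,
      Matrix.zero_apply] <;>
    split_ifs <;> first | rfl | omega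

private def Nmat (n : ℕ) : Matrix (Fin n) (Fin n) ℝ :=
  Matrix.of fun k l => if (l : ℕ) + 1 = k then 1 else 0

private lemma Cmat_eq (n : ℕ) : Cmat n = 1 - Nmat n := by
  ext k l
  simp only [Cmat, Nmat, Matrix.of_apply, Matrix.sub_apply, Matrix.one_apply, Fin.ext_iff]
  split_ifs <;> first | ring1 | omega | (exfalso; omega) | exact (‹False›).elim

private lemma NNt (n : ℕ) : Nmat n * (Nmat n)ᵀ =
    Matrix.diagonal (fun k : Fin n => if (k : ℕ) = 0 then 0 else 1) := by
  ext k l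
  rw [Matrix.mul_apply]
  rcases k with ⟨kv, hk⟩
  match kv with
  | 0 =>
    rw [Finset.sum_eq_zero (fun m _ => by simp [Nmat])]
    simp only [Matrix.diagonal_apply]
    split_ifs <;> simp_all
  | t + 1 =>
    rw [Finset.sum_eq_single ⟨t, by omega⟩]
    · simp only [Nmat, Matrix.transpose_apply, Matrix.of_apply, Matrix.diagonal_apply,
        Fin.ext_iff]
      split_ifs <;> first | ring1 | omega | (exfalso; omega) | exact (‹False›).elim
    · intro b _ hb
      have : (b : ℕ) ≠ t := fun h => hb (Fin.ext h)
      simp only [Nmat, Matrix.of_apply]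
      rw [if_neg (by omega)]
      ring
    · intro h; exact absurd (Finset.mem_univ _) h

private lemma NtN (n : ℕ) : (Nmat n)ᵀ * Nmat n =
    Matrix.diagonal (fun k : Fin n => if (k : ℕ) + 1 = n then 0 else 1) := by
  ext k l
  rw [Matrix.mul_apply]
  by_cases hk : (k : ℕ) + 1 = n
  · rw [Finset.sum_eq_zero (fun m _ => by
      simp only [Nmat, Matrix.transpose_apply, Matrix.of_apply]
      rw [if_neg (by have := m.isLt; omega)]
      ring)]
    simp only [Matrix.diagonal_apply]
    split_ifs <;> simp_all
  · rw [Finset.sum_eq_single ⟨(k : ℕ) + 1, by have := k.isLt; omega⟩]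
    · simp only [Nmat, Matrix.transpose_apply, Matrix.of_apply, Matrix.diagonal_apply,
        Fin.ext_iff]
      split_ifs <;> first | ring1 | omega | (exfalso; omega) | exact (‹False›).elim
    · intro b _ hb
      have : (b : ℕ) ≠ (k : ℕ) + 1 := fun h => hb (Fin.ext h)
      simp only [Nmat, Matrix.transpose_apply, Matrix.of_apply]
      rw [if_neg (by omega)]
      ring
    · intro h; exact absurd (Finset.mem_univ _) h

private lemma blockA (n : ℕ) (x : ℝ) :
    x • (1 : Matrix (Fin n) (Fin n) ℝ) - (Cmat n)ᵀ * Cmat n = triT x n := by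
  have expand : (Cmat n)ᵀ * Cmat n
      = 1 - Nmat n - (Nmat n)ᵀ + (Nmat n)ᵀ * Nmat n := by
    rw [Cmat_eq]
    rw [Matrix.transpose_sub, Matrix.transpose_one]
    noncomm_ring
  rw [expand, NtN]
  ext k l
  simp only [Matrix.sub_apply, Matrix.add_apply, Matrix.smul_apply, Matrix.one_apply,
    Matrix.diagonal_apply, Matrix.transpose_apply, Nmat, Matrix.of_apply, triT,
    smul_eq_mul, Fin.ext_iff]
  split_ifs <;> first | ring1 | omega | (exfalso; omega) | exact (‹False›).elim

private lemma blockB (n : ℕ) (x : ℝ) :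
    x • (1 : Matrix (Fin n) (Fin n) ℝ) - Cmat n * (Cmat n)ᵀ =
      (triT x n).submatrix Fin.revPerm Fin.revPerm := by
  have expand : Cmat n * (Cmat n)ᵀ
      = 1 - Nmat n - (Nmat n)ᵀ + Nmat n * (Nmat n)ᵀ := by
    rw [Cmat_eq]
    rw [Matrix.transpose_sub, Matrix.transpose_one]
    noncomm_ring
  rw [expand, NNt]
  ext k l
  simp only [Matrix.sub_apply, Matrix.add_apply, Matrix.smul_apply, Matrix.one_apply,
    Matrix.diagonal_apply, Matrix.transpose_apply, Nmat, Matrix.of_apply, triT,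
    Matrix.submatrix_apply, Fin.revPerm_apply, Fin.val_rev, smul_eq_mul, Fin.ext_iff]
  split_ifs <;> first | ring1 | omega | (exfalso; omega) | exact (‹False›).elim

end Aux

/-- Fix `n ≥ 1`. The characteristic polynomial of `A_1²` equals `g_n(x)²`:
`det(x I_{2n} − A_1²) = g_n(x)²` for all real `x`. -/
theorem charpoly_signedPath_sq (n : ℕ) (hn : 1 ≤ n) (x : ℝ) :
    (x • (1 : Matrix (Fin (2 * n)) (Fin (2 * n)) ℝ) - (signedPath n) ^ 2).det
      = (gPoly n x) ^ 2 := by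
  rw [← Matrix.det_submatrix_equiv_self (evenOdd n)]
  have hmul : (signedPath n ^ 2).submatrix (evenOdd n) (evenOdd n)
      = fromBlocks (Cmat n * (Cmat n)ᵀ) 0 0 ((Cmat n)ᵀ * Cmat n) := by
    rw [pow_two, ← Matrix.submatrix_mul_equiv (signedPath n) (signedPath n) _ (evenOdd n) _,
      signedPath_submatrix, Matrix.fromBlocks_multiply]
    simp
  have hA : (x • (1 : Matrix (Fin (2 * n)) (Fin (2 * n)) ℝ)
        - signedPath n ^ 2).submatrix (evenOdd n) (evenOdd n)
      = fromBlocks (x • 1 - Cmat n * (Cmat n)ᵀ) 0 0 (x • 1 - (Cmat n)ᵀ * Cmat n) := by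
    simp only [Matrix.submatrix_sub, Pi.sub_apply, Matrix.submatrix_smul, Pi.smul_apply,
      Matrix.submatrix_one_equiv, hmul]
    rw [← Matrix.fromBlocks_one, Matrix.fromBlocks_smul]
    ext (i | i) (j | j) <;>
      simp [Matrix.fromBlocks]
  rw [hA, Matrix.det_fromBlocks_zero₂₁, blockA, blockB,
    Matrix.det_submatrix_equiv_self, triT_det]
  ring
end
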